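/- arXiv:1905.03019 — 4 statements merged into one kernel-verified Lean document; each statement's English description precedes it below -/
import Mathlib

section
/- Let M' ⊂ ℂ be a finite nonempty set with Σ_{y∈M'} y² = 0 and σ_b² = (1/|M'|) Σ_{y∈M'} |y|², and let (C_k)_{k≥0} be i.i.d. random variables uniform on M'. Suppose that for each N, x*_N : M'^N → {−1,1}^N is any map satisfying the conditional-expectation-method guarantee η_N(c ⊙ x*_N(c)) ≤ 2^{−N} Σ_{x ∈ {−1,1}^N} η_N(c ⊙ x) for every c ∈ M'^N, where ⊙ denotes the componentwise product. Then, almost surely, limsup_{N→∞} η_N((C_0,…,C_{N−1}) ⊙ x*_N(C_0,…,C_{N−1})) ≤ 6. -/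
set_option maxHeartbeats 1000000

open MeasureTheory ProbabilityTheory Filter Finset
open scoped ENNReal NNReal

/-- The oversampled discrete-time OFDM symbol
`s(n, b) = (1/(σb·√N)) Σ_{k=0}^{N−1} b_k exp(2πi k n/(L N))`. -/
noncomputable def ofdm (L : ℕ) (σb : ℝ) {N : ℕ} (b : Fin N → ℂ) (n : ℕ) : ℂ :=
  ((1 / (σb * Real.sqrt N) : ℝ) : ℂ) *
    ∑ k : Fin N, b k * Complex.exp (2 * Real.pi * Complex.I * (k : ℕ) * n / ((L : ℂ) * (N : ℂ)))

/-- The Symbol Raw Cubic Metric `η_N(b) = (1/(L N)) Σ_{n=0}^{L N−1} |s(n, b)|^6`. -/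
noncomputable def srcm (L : ℕ) (σb : ℝ) {N : ℕ} (b : Fin N → ℂ) : ℝ :=
  (1 / (L * N) : ℝ) * ∑ n ∈ Finset.range (L * N), ‖ofdm L σb b n‖ ^ 6

namespace SRCMaux

open Complex

variable {N : ℕ}

noncomputable def sg (b : Bool) : ℂ := if b then 1 else -1

lemma sg_cases (b : Bool) : sg b = 1 ∨ sg b = -1 := by cases b <;> simp [sg]

noncomputable def Zf (a : Fin N → ℂ) (u : Finset (Fin N)) (ε : Fin N → Bool) : ℂ :=
  ∑ k ∈ u, sg (ε k) * a k

noncomputable def pS (a b : Fin N → ℂ) (i j : ℕ) (u : Finset (Fin N)) : ℂ :=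
  ∑ k ∈ u, (a k) ^ i * (b k) ^ j

noncomputable def mm (a b : Fin N → ℂ) (p q : ℕ) (u : Finset (Fin N)) : ℂ :=
  ∑ ε : Fin N → Bool, (Zf a u ε) ^ p * (Zf b u ε) ^ q

def flipb (j : Fin N) (ε : Fin N → Bool) : Fin N → Bool :=
  Function.update ε j (!(ε j))

lemma flipb_flipb (j : Fin N) (ε : Fin N → Bool) : flipb j (flipb j ε) = ε := by
  funext k
  by_cases h : k = j
  · subst h; simp [flipb]
  · simp [flipb, Function.update_apply, h]

lemma sum_flipb (j : Fin N) (g : (Fin N → Bool) → ℂ) :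
    ∑ ε : Fin N → Bool, g (flipb j ε) = ∑ ε : Fin N → Bool, g ε :=
  Fintype.sum_bijective (flipb j) (Function.Involutive.bijective (flipb_flipb j)) _ _
    (fun _ => rfl)

lemma Zf_flipb (a : Fin N → ℂ) {u : Finset (Fin N)} {j : Fin N} (hj : j ∉ u)
    (ε : Fin N → Bool) : Zf a u (flipb j ε) = Zf a u ε := by
  refine Finset.sum_congr rfl fun k hk => ?_
  have : k ≠ j := fun h => hj (h ▸ hk)
  simp [flipb, Function.update_apply, this]

lemma sg_flipb (j : Fin N) (ε : Fin N → Bool) : sg (flipb j ε j) = - sg (ε j) := by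
  cases h : ε j <;> simp [flipb, sg, h]

lemma Zf_insert (a : Fin N → ℂ) {u : Finset (Fin N)} {j : Fin N} (hj : j ∉ u)
    (ε : Fin N → Bool) : Zf a (insert j u) ε = sg (ε j) * a j + Zf a u ε := by
  simp [Zf, Finset.sum_insert hj]

lemma mm_symm (a b : Fin N → ℂ) (p q : ℕ) (u : Finset (Fin N)) :
    mm a b p q u = mm b a q p u :=
  Finset.sum_congr rfl fun _ _ => mul_comm _ _

lemma mm00 (a b : Fin N → ℂ) (u : Finset (Fin N)) : mm a b 0 0 u = (2 : ℂ) ^ N := by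
  simp [mm, Finset.card_univ, Fintype.card_fun]

lemma mm_insert_eq (a b : Fin N → ℂ) (p q : ℕ) {u : Finset (Fin N)} {j : Fin N}
    (hj : j ∉ u) (E : ℂ → ℂ → ℂ)
    (hE : ∀ σ Z W : ℂ, σ = 1 ∨ σ = -1 →
      (σ * a j + Z) ^ p * (σ * b j + W) ^ q
        + (-σ * a j + Z) ^ p * (-σ * b j + W) ^ q = 2 * E Z W) :
    mm a b p q (insert j u) = ∑ ε : Fin N → Bool, E (Zf a u ε) (Zf b u ε) := by
  have hins : mm a b p q (insert j u)
      = ∑ ε : Fin N → Bool,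
          (sg (ε j) * a j + Zf a u ε) ^ p * (sg (ε j) * b j + Zf b u ε) ^ q := by
    refine Finset.sum_congr rfl fun ε _ => ?_
    rw [Zf_insert a hj, Zf_insert b hj]
  have h2 : (2 : ℂ) * mm a b p q (insert j u)
      = ∑ ε : Fin N → Bool, (2 : ℂ) * E (Zf a u ε) (Zf b u ε) := by
    have hflip := sum_flipb j (fun ε =>
      (sg (ε j) * a j + Zf a u ε) ^ p * (sg (ε j) * b j + Zf b u ε) ^ q)
    calc (2 : ℂ) * mm a b p q (insert j u)
        = ∑ ε : Fin N → Bool,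
            ((sg (ε j) * a j + Zf a u ε) ^ p * (sg (ε j) * b j + Zf b u ε) ^ q
             + (sg (flipb j ε j) * a j + Zf a u (flipb j ε)) ^ p
               * (sg (flipb j ε j) * b j + Zf b u (flipb j ε)) ^ q) := by
          rw [Finset.sum_add_distrib, hflip, hins]; ring
      _ = ∑ ε : Fin N → Bool, (2 : ℂ) * E (Zf a u ε) (Zf b u ε) := by
          refine Finset.sum_congr rfl fun ε _ => ?_
          rw [sg_flipb, Zf_flipb a hj, Zf_flipb b hj]
          exact hE (sg (ε j)) _ _ (sg_cases (ε j))
  have := h2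
  rw [← Finset.mul_sum] at this
  exact mul_left_cancel₀ two_ne_zero this


section steps
variable (a b : Fin N → ℂ) {u : Finset (Fin N)} {j : Fin N}

lemma step11 (hj : j ∉ u) :
    mm a b 1 1 (insert j u) = mm a b 1 1 u + (a j * b j) * mm a b 0 0 u := by
  rw [mm_insert_eq a b 1 1 hj
    (fun Z W => Z ^ 1 * W ^ 1 + (a j * b j) * (Z ^ 0 * W ^ 0))
    (by rintro σ Z W (rfl | rfl) <;> ring)]
  simp only [Finset.sum_add_distrib, ← Finset.mul_sum]
  rfl

lemma step20 (hj : j ∉ u) :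
    mm a b 2 0 (insert j u) = mm a b 2 0 u + (a j) ^ 2 * mm a b 0 0 u := by
  rw [mm_insert_eq a b 2 0 hj
    (fun Z W => Z ^ 2 * W ^ 0 + (a j) ^ 2 * (Z ^ 0 * W ^ 0))
    (by rintro σ Z W (rfl | rfl) <;> ring)]
  simp only [Finset.sum_add_distrib, ← Finset.mul_sum]
  rfl

lemma step22 (hj : j ∉ u) :
    mm a b 2 2 (insert j u) = mm a b 2 2 u + (4 * (a j * b j)) * mm a b 1 1 u
      + (a j) ^ 2 * mm a b 0 2 u + (b j) ^ 2 * mm a b 2 0 u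
      + ((a j) ^ 2 * (b j) ^ 2) * mm a b 0 0 u := by
  rw [mm_insert_eq a b 2 2 hj
    (fun Z W => Z ^ 2 * W ^ 2 + (4 * (a j * b j)) * (Z ^ 1 * W ^ 1)
      + (a j) ^ 2 * (Z ^ 0 * W ^ 2) + (b j) ^ 2 * (Z ^ 2 * W ^ 0)
      + ((a j) ^ 2 * (b j) ^ 2) * (Z ^ 0 * W ^ 0))
    (by rintro σ Z W (rfl | rfl) <;> ring)]
  simp only [Finset.sum_add_distrib, ← Finset.mul_sum]
  rfl

lemma step31 (hj : j ∉ u) :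
    mm a b 3 1 (insert j u) = mm a b 3 1 u + (3 * (a j) ^ 2) * mm a b 1 1 u
      + (3 * (a j * b j)) * mm a b 2 0 u + ((a j) ^ 3 * b j) * mm a b 0 0 u := by
  rw [mm_insert_eq a b 3 1 hj
    (fun Z W => Z ^ 3 * W ^ 1 + (3 * (a j) ^ 2) * (Z ^ 1 * W ^ 1)
      + (3 * (a j * b j)) * (Z ^ 2 * W ^ 0) + ((a j) ^ 3 * b j) * (Z ^ 0 * W ^ 0))
    (by rintro σ Z W (rfl | rfl) <;> ring)]
  simp only [Finset.sum_add_distrib, ← Finset.mul_sum]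
  rfl

lemma step33 (hj : j ∉ u) :
    mm a b 3 3 (insert j u) = mm a b 3 3 u + (9 * (a j * b j)) * mm a b 2 2 u
      + (3 * (b j) ^ 2) * mm a b 3 1 u + (3 * (a j) ^ 2) * mm a b 1 3 u
      + (9 * ((a j) ^ 2 * (b j) ^ 2)) * mm a b 1 1 u
      + (3 * ((a j) ^ 3 * b j)) * mm a b 0 2 u
      + (3 * (a j * (b j) ^ 3)) * mm a b 2 0 u
      + ((a j) ^ 3 * (b j) ^ 3) * mm a b 0 0 u := by
  rw [mm_insert_eq a b 3 3 hj
    (fun Z W => Z ^ 3 * W ^ 3 + (9 * (a j * b j)) * (Z ^ 2 * W ^ 2)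
      + (3 * (b j) ^ 2) * (Z ^ 3 * W ^ 1) + (3 * (a j) ^ 2) * (Z ^ 1 * W ^ 3)
      + (9 * ((a j) ^ 2 * (b j) ^ 2)) * (Z ^ 1 * W ^ 1)
      + (3 * ((a j) ^ 3 * b j)) * (Z ^ 0 * W ^ 2)
      + (3 * (a j * (b j) ^ 3)) * (Z ^ 2 * W ^ 0)
      + ((a j) ^ 3 * (b j) ^ 3) * (Z ^ 0 * W ^ 0))
    (by rintro σ Z W (rfl | rfl) <;> ring)]
  simp only [Finset.sum_add_distrib, ← Finset.mul_sum]
  rfl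

end steps

lemma pS_insert (a b : Fin N → ℂ) (i j' : ℕ) {u : Finset (Fin N)} {j : Fin N}
    (hj : j ∉ u) : pS a b i j' (insert j u) = (a j) ^ i * (b j) ^ j' + pS a b i j' u :=
  Finset.sum_insert hj

lemma mm_closed (a b : Fin N → ℂ) (u : Finset (Fin N)) :
    mm a b 1 1 u = 2 ^ N * pS a b 1 1 u ∧
    mm a b 2 0 u = 2 ^ N * pS a b 2 0 u ∧
    mm a b 0 2 u = 2 ^ N * pS a b 0 2 u ∧
    mm a b 2 2 u = 2 ^ N * (2 * (pS a b 1 1 u) ^ 2 + pS a b 2 0 u * pS a b 0 2 u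
      - 2 * pS a b 2 2 u) ∧
    mm a b 3 1 u = 2 ^ N * (3 * pS a b 1 1 u * pS a b 2 0 u - 2 * pS a b 3 1 u) ∧
    mm a b 1 3 u = 2 ^ N * (3 * pS a b 1 1 u * pS a b 0 2 u - 2 * pS a b 1 3 u) ∧
    mm a b 3 3 u = 2 ^ N * (6 * (pS a b 1 1 u) ^ 3
      + 9 * pS a b 1 1 u * pS a b 2 0 u * pS a b 0 2 u
      - 18 * pS a b 1 1 u * pS a b 2 2 u - 6 * pS a b 0 2 u * pS a b 3 1 u
      - 6 * pS a b 2 0 u * pS a b 1 3 u + 16 * pS a b 3 3 u) := by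
  induction u using Finset.induction_on with
  | empty =>
      refine ⟨?_, ?_, ?_, ?_, ?_, ?_, ?_⟩ <;>
        simp [mm, Zf, pS]
  | insert _ _ hj =>
      rename_i j u ih
      obtain ⟨h11, h20, h02, h22, h31, h13, h33⟩ := ih
      have s02 : mm a b 0 2 (insert j u) = mm a b 0 2 u + (b j) ^ 2 * mm a b 0 0 u := by
        rw [mm_symm a b 0 2, step20 b a hj, mm_symm b a 2 0, mm_symm b a 0 0]
      have s13 : mm a b 1 3 (insert j u) = mm a b 1 3 u + (3 * (b j) ^ 2) * mm a b 1 1 u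
          + (3 * (b j * a j)) * mm a b 0 2 u + ((b j) ^ 3 * a j) * mm a b 0 0 u := by
        rw [mm_symm a b 1 3, step31 b a hj, mm_symm b a 3 1, mm_symm b a 1 1,
          mm_symm b a 2 0, mm_symm b a 0 0]
      refine ⟨?_, ?_, ?_, ?_, ?_, ?_, ?_⟩
      · rw [step11 a b hj, h11, mm00, pS_insert a b 1 1 hj]; ring
      · rw [step20 a b hj, h20, mm00, pS_insert a b 2 0 hj]; ring
      · rw [s02, h02, mm00, pS_insert a b 0 2 hj]; ring
      · rw [step22 a b hj, h22, h11, h02, h20, mm00, pS_insert a b 2 2 hj,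
          pS_insert a b 1 1 hj, pS_insert a b 2 0 hj, pS_insert a b 0 2 hj]; ring
      · rw [step31 a b hj, h31, h11, h20, mm00, pS_insert a b 3 1 hj,
          pS_insert a b 1 1 hj, pS_insert a b 2 0 hj]; ring
      · rw [s13, h13, h11, h02, mm00, pS_insert a b 1 3 hj,
          pS_insert a b 1 1 hj, pS_insert a b 0 2 hj]; ring
      · rw [step33 a b hj, h33, h22, h31, h13, h11, h02, h20, mm00,
          pS_insert a b 3 3 hj, pS_insert a b 1 1 hj, pS_insert a b 2 0 hj,
          pS_insert a b 0 2 hj, pS_insert a b 2 2 hj, pS_insert a b 3 1 hj,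
          pS_insert a b 1 3 hj]; ring

lemma conj_sg (b : Bool) : (starRingEnd ℂ) (sg b) = sg b := by cases b <;> simp [sg]

lemma Zf_conj (a : Fin N → ℂ) (u : Finset (Fin N)) (ε : Fin N → Bool) :
    Zf (fun k => (starRingEnd ℂ) (a k)) u ε = (starRingEnd ℂ) (Zf a u ε) := by
  rw [Zf, Zf, map_sum]
  exact Finset.sum_congr rfl fun k _ => by rw [map_mul, conj_sg]

lemma normSq_eq_norm_sq (z : ℂ) : normSq z = ‖z‖ ^ 2 := by
  rw [Complex.normSq_eq_norm_sq]

lemma momentBound (a : Fin N → ℂ) :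
    ∑ ε : Fin N → Bool, ‖∑ k, sg (ε k) * a k‖ ^ 6 ≤
      2 ^ N * (6 * (∑ k, ‖a k‖ ^ 2) ^ 3
        + 9 * (∑ k, ‖a k‖ ^ 2) * ‖∑ k, (a k) ^ 2‖ ^ 2
        + 12 * ‖∑ k, (a k) ^ 2‖ * (∑ k, ‖a k‖ ^ 4)
        + 16 * ∑ k, ‖a k‖ ^ 6) := by
  classical
  set b : Fin N → ℂ := fun k => (starRingEnd ℂ) (a k) with hb
  set A2 : ℝ := ∑ k, ‖a k‖ ^ 2 with hA2
  set A4 : ℝ := ∑ k, ‖a k‖ ^ 4 with hA4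
  set A6 : ℝ := ∑ k, ‖a k‖ ^ 6 with hA6
  set S : ℂ := ∑ k, (a k) ^ 2 with hS
  set T : ℂ := pS a b 3 1 univ with hT
  have p11 : pS a b 1 1 univ = (A2 : ℂ) := by
    rw [pS, hA2]
    push_cast
    refine Finset.sum_congr rfl fun k _ => ?_
    rw [pow_one, pow_one, hb, Complex.mul_conj, normSq_eq_norm_sq]
    push_cast
    ring
  have p20 : pS a b 2 0 univ = S := by
    rw [pS, hS]
    exact Finset.sum_congr rfl fun k _ => by rw [pow_zero, mul_one]
  have p02 : pS a b 0 2 univ = (starRingEnd ℂ) S := by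
    rw [pS, hS, map_sum]
    exact Finset.sum_congr rfl fun k _ => by rw [pow_zero, one_mul, hb, map_pow]
  have p22 : pS a b 2 2 univ = (A4 : ℂ) := by
    rw [pS, hA4]
    push_cast
    refine Finset.sum_congr rfl fun k _ => ?_
    rw [hb, ← mul_pow, Complex.mul_conj, normSq_eq_norm_sq]
    push_cast
    ring
  have p33 : pS a b 3 3 univ = (A6 : ℂ) := by
    rw [pS, hA6]
    push_cast
    refine Finset.sum_congr rfl fun k _ => ?_
    rw [hb, ← mul_pow, Complex.mul_conj, normSq_eq_norm_sq]
    push_cast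
    ring
  have p13 : pS a b 1 3 univ = (starRingEnd ℂ) T := by
    rw [hT, pS, pS, map_sum]
    refine Finset.sum_congr rfl fun k _ => ?_
    rw [map_mul, map_pow, hb, map_pow, Complex.conj_conj]
    ring
  have hTn : ‖T‖ ≤ A4 := by
    rw [hT, pS, hA4]
    refine (norm_sum_le _ _).trans (le_of_eq (Finset.sum_congr rfl fun k _ => ?_))
    rw [norm_mul, norm_pow, norm_pow, hb, pow_one, RCLike.norm_conj]
    ring
  have hSn : S * (starRingEnd ℂ) S = ((‖S‖ ^ 2 : ℝ) : ℂ) := by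
    rw [Complex.mul_conj, normSq_eq_norm_sq]
  have hcast : ((∑ ε : Fin N → Bool, ‖Zf a univ ε‖ ^ 6 : ℝ) : ℂ) = mm a b 3 3 univ := by
    rw [mm]
    push_cast
    refine Finset.sum_congr rfl fun ε _ => ?_
    rw [hb, Zf_conj a univ ε, ← mul_pow, Complex.mul_conj, normSq_eq_norm_sq]
    push_cast
    ring
  have hmm := (mm_closed a b univ).2.2.2.2.2.2
  rw [p11, p20, p02, p22, p33, p13] at hmm
  rw [← hT] at hmm
  set w : ℂ := S * (starRingEnd ℂ) T with hw
  have hsum : (6 : ℂ) * ((starRingEnd ℂ) S * T) + 6 * (S * (starRingEnd ℂ) T)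
      = ((12 * w.re : ℝ) : ℂ) := by
    have h1 : (starRingEnd ℂ) S * T = (starRingEnd ℂ) w := by
      rw [hw, map_mul, Complex.conj_conj]
    have h2 : w + (starRingEnd ℂ) w = ((2 * w.re : ℝ) : ℂ) := by
      rw [← Complex.add_conj]
    rw [h1, hw]
    push_cast at h2 ⊢
    linear_combination 6 * h2
  have hkey : ((∑ ε : Fin N → Bool, ‖Zf a univ ε‖ ^ 6 : ℝ) : ℂ)
      = (((2:ℝ) ^ N * (6 * A2 ^ 3 + 9 * A2 * ‖S‖ ^ 2 - 18 * A2 * A4 + 16 * A6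
          - 12 * w.re) : ℝ) : ℂ) := by
    rw [hcast, hmm]
    push_cast at hSn hsum ⊢
    linear_combination (2:ℂ) ^ N * 9 * (A2 : ℂ) * hSn - (2:ℂ) ^ N * hsum
  have hre : ∑ ε : Fin N → Bool, ‖Zf a univ ε‖ ^ 6
      = (2:ℝ) ^ N * (6 * A2 ^ 3 + 9 * A2 * ‖S‖ ^ 2 - 18 * A2 * A4 + 16 * A6
          - 12 * w.re) := by
    exact_mod_cast hkey
  have hLHS : ∑ ε : Fin N → Bool, ‖∑ k, sg (ε k) * a k‖ ^ 6
      = ∑ ε : Fin N → Bool, ‖Zf a univ ε‖ ^ 6 := rfl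
  rw [hLHS, hre]
  have hA2n : 0 ≤ A2 := Finset.sum_nonneg fun k _ => by positivity
  have hA4n : 0 ≤ A4 := Finset.sum_nonneg fun k _ => by positivity
  have hwre : -(‖S‖ * A4) ≤ w.re := by
    have h1 : |w.re| ≤ ‖w‖ := Complex.abs_re_le_norm w
    have h2 : ‖w‖ ≤ ‖S‖ * A4 := by
      rw [hw, norm_mul, RCLike.norm_conj]
      exact mul_le_mul_of_nonneg_left hTn (norm_nonneg _)
    have := (abs_le.mp h1).1
    linarith
  have h2N : (0:ℝ) < 2 ^ N := by positivity
  have hmain : 6 * A2 ^ 3 + 9 * A2 * ‖S‖ ^ 2 - 18 * A2 * A4 + 16 * A6 - 12 * w.re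
      ≤ 6 * A2 ^ 3 + 9 * A2 * ‖S‖ ^ 2 + 12 * ‖S‖ * A4 + 16 * A6 := by
    nlinarith [mul_nonneg hA2n hA4n]
  calc (2:ℝ) ^ N * (6 * A2 ^ 3 + 9 * A2 * ‖S‖ ^ 2 - 18 * A2 * A4 + 16 * A6 - 12 * w.re)
      ≤ (2:ℝ) ^ N * (6 * A2 ^ 3 + 9 * A2 * ‖S‖ ^ 2 + 12 * ‖S‖ * A4 + 16 * A6) :=
        mul_le_mul_of_nonneg_left hmain (le_of_lt h2N)
    _ = _ := by ring

lemma orth {N M : ℕ} (w : Fin N → ℂ) (hw1 : ∀ k, w k ^ M = 1)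
    (hwu : ∀ k, w k * (starRingEnd ℂ) (w k) = 1)
    (hsep : ∀ k l : Fin N, k ≠ l → w k ≠ w l) (d : Fin N → ℂ) :
    ∑ n ∈ range M, ‖∑ k, d k * w k ^ n‖ ^ 2 = M * ∑ k, ‖d k‖ ^ 2 := by
  classical
  have key : ∀ k l : Fin N, ∑ n ∈ range M, (w k * (starRingEnd ℂ) (w l)) ^ n
      = if k = l then (M : ℂ) else 0 := by
    intro k l
    by_cases h : k = l
    · subst h
      simp [hwu k]
    · rw [if_neg h]
      have hcnz : (starRingEnd ℂ) (w l) ≠ 0 := by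
        intro hz
        have := hwu l
        rw [hz, mul_zero] at this
        exact one_ne_zero this.symm
      have hq : w k * (starRingEnd ℂ) (w l) ≠ 1 := by
        intro heq
        have : (w k - w l) * (starRingEnd ℂ) (w l) = 0 := by
          rw [sub_mul, heq, hwu l, sub_self]
        rcases mul_eq_zero.mp this with h1 | h1
        · exact hsep k l h (sub_eq_zero.mp h1)
        · exact hcnz h1
      have hqM : (w k * (starRingEnd ℂ) (w l)) ^ M = 1 := by
        rw [mul_pow, hw1 k, ← map_pow, hw1 l, map_one, one_mul]
      rw [geom_sum_eq hq, hqM, sub_self, zero_div]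
  have hcast : ((∑ n ∈ range M, ‖∑ k, d k * w k ^ n‖ ^ 2 : ℝ) : ℂ)
      = ∑ n ∈ range M, (∑ k, d k * w k ^ n)
          * (starRingEnd ℂ) (∑ k, d k * w k ^ n) := by
    push_cast
    refine Finset.sum_congr rfl fun n _ => ?_
    rw [Complex.mul_conj, normSq_eq_norm_sq]
    push_cast
    ring
  have hexp : ∑ n ∈ range M, (∑ k, d k * w k ^ n)
        * (starRingEnd ℂ) (∑ k, d k * w k ^ n)
      = ∑ k, ∑ l, (d k * (starRingEnd ℂ) (d l))
          * ∑ n ∈ range M, (w k * (starRingEnd ℂ) (w l)) ^ n := by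
    have step1 : ∀ n, (∑ k, d k * w k ^ n) * (starRingEnd ℂ) (∑ k, d k * w k ^ n)
        = ∑ k, ∑ l, (d k * (starRingEnd ℂ) (d l))
            * (w k * (starRingEnd ℂ) (w l)) ^ n := by
      intro n
      rw [map_sum, Finset.sum_mul_sum]
      refine Finset.sum_congr rfl fun k _ => Finset.sum_congr rfl fun l _ => ?_
      rw [map_mul, map_pow, mul_pow]
      ring
    calc ∑ n ∈ range M, (∑ k, d k * w k ^ n) * (starRingEnd ℂ) (∑ k, d k * w k ^ n)
        = ∑ n ∈ range M, ∑ k, ∑ l, (d k * (starRingEnd ℂ) (d l))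
            * (w k * (starRingEnd ℂ) (w l)) ^ n :=
          Finset.sum_congr rfl fun n _ => step1 n
      _ = ∑ k, ∑ n ∈ range M, ∑ l, (d k * (starRingEnd ℂ) (d l))
            * (w k * (starRingEnd ℂ) (w l)) ^ n := Finset.sum_comm
      _ = ∑ k, ∑ l, ∑ n ∈ range M, (d k * (starRingEnd ℂ) (d l))
            * (w k * (starRingEnd ℂ) (w l)) ^ n :=
          Finset.sum_congr rfl fun k _ => Finset.sum_comm
      _ = ∑ k, ∑ l, (d k * (starRingEnd ℂ) (d l))
            * ∑ n ∈ range M, (w k * (starRingEnd ℂ) (w l)) ^ n :=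
          Finset.sum_congr rfl fun k _ => Finset.sum_congr rfl fun l _ =>
            (Finset.mul_sum _ _ _).symm
  have hdiag : ∑ k, ∑ l, (d k * (starRingEnd ℂ) (d l))
        * ∑ n ∈ range M, (w k * (starRingEnd ℂ) (w l)) ^ n
      = ((M * ∑ k, ‖d k‖ ^ 2 : ℝ) : ℂ) := by
    push_cast
    rw [Finset.mul_sum]
    refine Finset.sum_congr rfl fun k _ => ?_
    rw [Finset.sum_congr rfl fun l (_ : l ∈ univ) => by rw [key k l]]
    simp only [mul_ite, mul_zero, Finset.sum_ite_eq, Finset.mem_univ, if_true]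
    rw [Complex.mul_conj, normSq_eq_norm_sq]
    push_cast
    ring
  have : ((∑ n ∈ range M, ‖∑ k, d k * w k ^ n‖ ^ 2 : ℝ) : ℂ)
      = ((M * ∑ k, ‖d k‖ ^ 2 : ℝ) : ℂ) := by rw [hcast, hexp, hdiag]
  exact_mod_cast this


section exps
variable (L : ℕ) {N' : ℕ}

noncomputable def wf (L N' : ℕ) (k : Fin N') : ℂ :=
  Complex.exp (2 * Real.pi * Complex.I * (2 * (k : ℕ)) / ((L : ℂ) * (N' : ℂ)))

lemma wf_arg (k : Fin N') :
    2 * (Real.pi : ℂ) * Complex.I * (2 * (k : ℕ)) / ((L : ℂ) * (N' : ℂ))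
      = ((2 * Real.pi * (2 * (k : ℕ)) / (L * N') : ℝ) : ℂ) * Complex.I := by
  push_cast
  ring

lemma wf_unit (k : Fin N') : wf L N' k * (starRingEnd ℂ) (wf L N' k) = 1 := by
  rw [wf, wf_arg, ← Complex.exp_conj]
  rw [← Complex.exp_add]
  rw [map_mul, Complex.conj_ofReal, Complex.conj_I]
  simp

lemma wf_pow (hL : 2 ≤ L) (hN : 0 < N') (k : Fin N') : wf L N' k ^ (L * N') = 1 := by
  rw [wf, ← Complex.exp_nat_mul]
  have hLN : ((L : ℂ) * (N' : ℂ)) ≠ 0 := by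
    have h1 : (L : ℂ) ≠ 0 := by
      simp only [ne_eq, Nat.cast_eq_zero]; omega
    have h2 : (N' : ℂ) ≠ 0 := by
      simp only [ne_eq, Nat.cast_eq_zero]; omega
    exact mul_ne_zero h1 h2
  have harg : ((L * N' : ℕ) : ℂ) * (2 * (Real.pi : ℂ) * Complex.I * (2 * (k : ℕ))
      / ((L : ℂ) * (N' : ℂ))) = ((2 * (k : ℕ) : ℕ) : ℂ) * (2 * Real.pi * Complex.I) := by
    push_cast
    field_simp
    exact mul_div_cancel_left₀ _ hLN
  rw [harg, Complex.exp_nat_mul_two_pi_mul_I]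

lemma wf_sep (hL : 2 ≤ L) (hN : 0 < N') (k l : Fin N') (hkl : k ≠ l) : wf L N' k ≠ wf L N' l := by
  intro heq
  rw [wf, wf, Complex.exp_eq_exp_iff_exists_int] at heq
  obtain ⟨m, hm⟩ := heq
  have hLN : ((L : ℂ) * (N' : ℂ)) ≠ 0 := by
    have h1 : (L : ℂ) ≠ 0 := by simp only [ne_eq, Nat.cast_eq_zero]; omega
    have h2 : (N' : ℂ) ≠ 0 := by simp only [ne_eq, Nat.cast_eq_zero]; omega
    exact mul_ne_zero h1 h2
  have hπI : (2 * (Real.pi : ℂ) * Complex.I) ≠ 0 := by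
    have : (Real.pi : ℂ) ≠ 0 := by
      simp only [ne_eq, Complex.ofReal_eq_zero]
      exact Real.pi_ne_zero
    simp [this, Complex.I_ne_zero]
  -- derive integer equation
  have hint : (2 * (k : ℤ) : ℂ) = 2 * (l : ℤ) + m * ((L : ℤ) * (N' : ℤ)) := by
    have h2 : 2 * (Real.pi : ℂ) * Complex.I * (2 * (k : ℕ))
        = 2 * (Real.pi : ℂ) * Complex.I * (2 * (l : ℕ))
          + (m : ℂ) * (2 * (Real.pi : ℂ) * Complex.I) * ((L : ℂ) * (N' : ℂ)) := by
      have := hm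
      rw [div_add' _ _ _ hLN, div_left_inj' hLN] at this
      linear_combination this
    push_cast at h2 ⊢
    apply mul_left_cancel₀ hπI
    linear_combination h2
  have hint' : 2 * (k : ℤ) = 2 * (l : ℤ) + m * ((L : ℤ) * (N' : ℤ)) := by
    exact_mod_cast hint
  have hk : (k : ℤ) < N' := by exact_mod_cast k.isLt
  have hl : (l : ℤ) < N' := by exact_mod_cast l.isLt
  have hk0 : (0 : ℤ) ≤ (k : ℤ) := by positivity
  have hl0 : (0 : ℤ) ≤ (l : ℤ) := by positivity
  have hL' : (2 : ℤ) ≤ L := by exact_mod_cast hL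
  have hN' : (1 : ℤ) ≤ N' := by exact_mod_cast hN
  have hkl' : (k : ℤ) ≠ (l : ℤ) := by
    intro h
    exact hkl (Fin.ext (by exact_mod_cast h))
  have hLN' : 2 * (N' : ℤ) ≤ (L : ℤ) * N' := by nlinarith
  rcases lt_trichotomy m 0 with hm0 | hm0 | hm0
  · have h1 : m ≤ -1 := by omega
    nlinarith
  · subst hm0; omega
  · have h1 : 1 ≤ m := by omega
    nlinarith

end exps

noncomputable def aaF (L : ℕ) (σb : ℝ) {N' : ℕ} (c : Fin N' → ℂ) (n : ℕ) (k : Fin N') : ℂ :=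
  ((1 / (σb * Real.sqrt N') : ℝ) : ℂ) * c k
    * Complex.exp (2 * Real.pi * Complex.I * (k : ℕ) * n / ((L : ℂ) * (N' : ℂ)))

noncomputable def ddF (σb : ℝ) {N' : ℕ} (c : Fin N' → ℂ) (k : Fin N') : ℂ :=
  (((1 / (σb * Real.sqrt N') : ℝ)) : ℂ) ^ 2 * (c k) ^ 2

lemma srcm_avg (L : ℕ) (hL : 2 ≤ L) (σb : ℝ) (hσb : 0 < σb) {N' : ℕ} (hN : 0 < N')
    (c : Fin N' → ℂ) :
    ((2:ℝ) ^ N')⁻¹ * ∑ ε : Fin N' → Bool,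
        srcm L σb (fun k => c k * (if ε k then 1 else -1))
      ≤ 6 * ((∑ k, ‖c k‖ ^ 2) * (σb ^ 2 * (N' : ℝ))⁻¹) ^ 3
        + 21 * ((∑ k, ‖c k‖ ^ 2) * (σb ^ 2 * (N' : ℝ))⁻¹)
            * ((∑ k, ‖c k‖ ^ 4) * ((σb ^ 2 * (N' : ℝ))⁻¹) ^ 2)
        + 16 * ((∑ k, ‖c k‖ ^ 6) * ((σb ^ 2 * (N' : ℝ))⁻¹) ^ 3) := by
  classical
  set ρ : ℝ := (σb ^ 2 * (N' : ℝ))⁻¹ with hρ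
  have hN0 : (0:ℝ) < (N' : ℝ) := by exact_mod_cast hN
  have hsqrtN : (0:ℝ) < Real.sqrt N' := Real.sqrt_pos.mpr hN0
  have hcoefpos : (0:ℝ) < 1 / (σb * Real.sqrt N') := by positivity
  have hcoef2 : ‖(((1 / (σb * Real.sqrt N') : ℝ)) : ℂ)‖ ^ 2 = ρ := by
    rw [Complex.norm_real, Real.norm_eq_abs, abs_of_pos hcoefpos, hρ, div_pow, one_pow,
      mul_pow, Real.sq_sqrt (le_of_lt hN0), one_div]
  have hexpnorm : ∀ (n : ℕ) (k : Fin N'),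
      ‖Complex.exp (2 * Real.pi * Complex.I * (k : ℕ) * n / ((L : ℂ) * (N' : ℂ)))‖ = 1 := by
    intro n k
    have harg : 2 * (Real.pi : ℂ) * Complex.I * (k : ℕ) * n / ((L : ℂ) * (N' : ℂ))
        = ((2 * Real.pi * (k : ℕ) * n / (L * N') : ℝ) : ℂ) * Complex.I := by
      push_cast; ring
    rw [harg, Complex.norm_exp_ofReal_mul_I]
  have haan : ∀ (n : ℕ) (k : Fin N'), ‖aaF L σb c n k‖ ^ 2 = ‖c k‖ ^ 2 * ρ := by
    intro n k
    rw [aaF, norm_mul, norm_mul, hexpnorm n k, mul_one, mul_pow, hcoef2]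
    ring
  have hA2 : ∀ n : ℕ, ∑ k, ‖aaF L σb c n k‖ ^ 2 = (∑ k, ‖c k‖ ^ 2) * ρ := by
    intro n
    rw [Finset.sum_mul]
    exact Finset.sum_congr rfl fun k _ => haan n k
  have hA4 : ∀ n : ℕ, ∑ k, ‖aaF L σb c n k‖ ^ 4 = (∑ k, ‖c k‖ ^ 4) * ρ ^ 2 := by
    intro n
    rw [Finset.sum_mul]
    refine Finset.sum_congr rfl fun k _ => ?_
    have : ‖aaF L σb c n k‖ ^ 4 = (‖aaF L σb c n k‖ ^ 2) ^ 2 := by ring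
    rw [this, haan n k]
    ring
  have hA6 : ∀ n : ℕ, ∑ k, ‖aaF L σb c n k‖ ^ 6 = (∑ k, ‖c k‖ ^ 6) * ρ ^ 3 := by
    intro n
    rw [Finset.sum_mul]
    refine Finset.sum_congr rfl fun k _ => ?_
    have : ‖aaF L σb c n k‖ ^ 6 = (‖aaF L σb c n k‖ ^ 2) ^ 3 := by ring
    rw [this, haan n k]
    ring
  have hsq : ∀ n : ℕ, ∑ k, (aaF L σb c n k) ^ 2 = ∑ k, ddF σb c k * wf L N' k ^ n := by
    intro n
    refine Finset.sum_congr rfl fun k _ => ?_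
    rw [aaF, ddF, wf]
    have h2 : (Complex.exp (2 * Real.pi * Complex.I * (k : ℕ) * n
        / ((L : ℂ) * (N' : ℂ)))) ^ 2
        = Complex.exp (2 * Real.pi * Complex.I * (2 * (k : ℕ)) / ((L : ℂ) * (N' : ℂ))) ^ n := by
      rw [← Complex.exp_nat_mul, ← Complex.exp_nat_mul]
      congr 1
      push_cast
      ring
    rw [← h2]
    ring
  have hddn : ∑ k, ‖ddF σb c k‖ ^ 2 = (∑ k, ‖c k‖ ^ 4) * ρ ^ 2 := by
    rw [Finset.sum_mul]
    refine Finset.sum_congr rfl fun k _ => ?_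
    rw [ddF, norm_mul, norm_pow, norm_pow, mul_pow, hcoef2]
    ring
  set A2 : ℝ := (∑ k, ‖c k‖ ^ 2) * ρ with hA2d
  set A4 : ℝ := (∑ k, ‖c k‖ ^ 4) * ρ ^ 2 with hA4d
  set A6 : ℝ := (∑ k, ‖c k‖ ^ 6) * ρ ^ 3 with hA6d
  have hρ0 : 0 ≤ ρ := by positivity
  have hA2n : 0 ≤ A2 := by
    rw [hA2d]; apply mul_nonneg _ hρ0; exact Finset.sum_nonneg fun k _ => by positivity
  have hA4n : 0 ≤ A4 := by
    rw [hA4d]; apply mul_nonneg _ (by positivity); exact Finset.sum_nonneg fun k _ => by positivity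
  have hSb : ∀ n : ℕ, ‖∑ k, (aaF L σb c n k) ^ 2‖ ≤ A2 := by
    intro n
    refine (norm_sum_le _ _).trans ?_
    rw [← hA2 n]
    exact Finset.sum_le_sum fun k _ => le_of_eq (norm_pow _ _)
  have hper : ∀ n : ℕ,
      ∑ ε : Fin N' → Bool, ‖∑ k, sg (ε k) * aaF L σb c n k‖ ^ 6
        ≤ 2 ^ N' * ((6 * A2 ^ 3 + 12 * A2 * A4 + 16 * A6)
            + 9 * A2 * ‖∑ k, ddF σb c k * wf L N' k ^ n‖ ^ 2) := by
    intro n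
    refine (momentBound (aaF L σb c n)).trans ?_
    rw [hA2 n, hA4 n, hA6 n, ← hsq n]
    apply mul_le_mul_of_nonneg_left _ (by positivity : (0:ℝ) ≤ 2 ^ N')
    have hs := hSb n
    nlinarith [norm_nonneg (∑ k, (aaF L σb c n k) ^ 2)]
  have horth : ∑ n ∈ range (L * N'), ‖∑ k, ddF σb c k * wf L N' k ^ n‖ ^ 2
      = (L * N' : ℕ) * A4 := by
    rw [orth (wf L N') (wf_pow L hL hN) (wf_unit L) (wf_sep L hL hN) (ddF σb c), hddn, hA4d]
  -- assemble
  have hofdm : ∀ (ε : Fin N' → Bool) (n : ℕ),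
      ofdm L σb (fun k => c k * (if ε k then 1 else -1)) n
        = ∑ k, sg (ε k) * aaF L σb c n k := by
    intro ε n
    rw [ofdm, Finset.mul_sum]
    refine Finset.sum_congr rfl fun k _ => ?_
    simp only [sg, aaF]
    ring
  have hLN0 : (0:ℝ) < ((L * N' : ℕ) : ℝ) := by
    have : 0 < L * N' := by positivity
    exact_mod_cast this
  have h2Npos : (0:ℝ) < 2 ^ N' := by positivity
  have hswap : ∑ ε : Fin N' → Bool, srcm L σb (fun k => c k * (if ε k then 1 else -1))
      = (1 / ((L : ℝ) * N')) * ∑ n ∈ range (L * N'),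
          ∑ ε : Fin N' → Bool, ‖∑ k, sg (ε k) * aaF L σb c n k‖ ^ 6 := by
    rw [← Finset.sum_comm]
    rw [Finset.mul_sum]
    refine Finset.sum_congr rfl fun ε _ => ?_
    rw [srcm]
    congr 1
    refine Finset.sum_congr rfl fun n _ => ?_
    rw [hofdm ε n]
  have hsum_le : ∑ n ∈ range (L * N'),
      ∑ ε : Fin N' → Bool, ‖∑ k, sg (ε k) * aaF L σb c n k‖ ^ 6
      ≤ 2 ^ N' * ((L * N' : ℕ) * (6 * A2 ^ 3 + 12 * A2 * A4 + 16 * A6)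
          + 9 * A2 * ((L * N' : ℕ) * A4)) := by
    calc ∑ n ∈ range (L * N'), ∑ ε : Fin N' → Bool, ‖∑ k, sg (ε k) * aaF L σb c n k‖ ^ 6
        ≤ ∑ n ∈ range (L * N'), 2 ^ N' * ((6 * A2 ^ 3 + 12 * A2 * A4 + 16 * A6)
            + 9 * A2 * ‖∑ k, ddF σb c k * wf L N' k ^ n‖ ^ 2) :=
          Finset.sum_le_sum fun n _ => hper n
      _ = 2 ^ N' * ((L * N' : ℕ) * (6 * A2 ^ 3 + 12 * A2 * A4 + 16 * A6)
          + 9 * A2 * ∑ n ∈ range (L * N'), ‖∑ k, ddF σb c k * wf L N' k ^ n‖ ^ 2) := by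
          rw [← Finset.mul_sum, Finset.sum_add_distrib, Finset.sum_const, Finset.card_range,
            ← Finset.mul_sum]
          simp only [nsmul_eq_mul]
      _ = 2 ^ N' * ((L * N' : ℕ) * (6 * A2 ^ 3 + 12 * A2 * A4 + 16 * A6)
          + 9 * A2 * ((L * N' : ℕ) * A4)) := by rw [horth]
  have hLNcast : ((L * N' : ℕ) : ℝ) = (L : ℝ) * N' := by push_cast; ring
  calc ((2:ℝ) ^ N')⁻¹ * ∑ ε : Fin N' → Bool,
        srcm L σb (fun k => c k * (if ε k then 1 else -1))
      = ((2:ℝ) ^ N')⁻¹ * ((1 / ((L : ℝ) * N')) * ∑ n ∈ range (L * N'),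
          ∑ ε : Fin N' → Bool, ‖∑ k, sg (ε k) * aaF L σb c n k‖ ^ 6) := by rw [hswap]
    _ ≤ ((2:ℝ) ^ N')⁻¹ * ((1 / ((L : ℝ) * N')) *
          (2 ^ N' * ((L * N' : ℕ) * (6 * A2 ^ 3 + 12 * A2 * A4 + 16 * A6)
            + 9 * A2 * ((L * N' : ℕ) * A4)))) := by
        apply mul_le_mul_of_nonneg_left _ (by positivity)
        apply mul_le_mul_of_nonneg_left hsum_le (by positivity)
    _ = 6 * A2 ^ 3 + 21 * A2 * A4 + 16 * A6 := by
        rw [hLNcast]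
        field_simp
        ring
    _ = _ := by rw [hA2d, hA4d, hA6d]

lemma srcm_nonneg (L : ℕ) (σb : ℝ) {N : ℕ} (b : Fin N → ℂ) : 0 ≤ srcm L σb b := by
  rw [srcm]
  apply mul_nonneg
  · positivity
  · exact Finset.sum_nonneg fun n _ => by positivity

lemma integrable_dirac_real {f : ℂ → ℝ} (hf : Measurable f) (y : ℂ) :
    Integrable f (Measure.dirac y) := by
  constructor
  · exact hf.aestronglyMeasurable
  · rw [HasFiniteIntegral, lintegral_dirac' y hf.enorm]
    exact ENNReal.coe_lt_top

end SRCMaux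

open SRCMaux

/-- if `x*_N` satisfies the conditional-expectation-method guarantee
`η_N(c ⊙ x*_N(c)) ≤ 2^{−N} Σ_{x ∈ {−1,1}^N} η_N(c ⊙ x)` for every `c ∈ M'^N`, then almost
surely `limsup_N η_N(C ⊙ x*_N(C)) ≤ 6` for i.i.d. data symbols `C_k` uniform on `M'`. -/
theorem srcm_limsup_le_six_of_ce_guarantee
    {Ω : Type*} [MeasurableSpace Ω] (P : Measure Ω) [IsProbabilityMeasure P]
    (L : ℕ) (hL : 2 ≤ L)
    (M' : Finset ℂ) (hM'ne : M'.Nonempty)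
    (hM'sq : ∑ y ∈ M', y ^ 2 = 0)
    (σb : ℝ) (hσb : 0 < σb)
    (hσb2 : σb ^ 2 = (M'.card : ℝ)⁻¹ * ∑ y ∈ M', ‖y‖ ^ 2)
    (C : ℕ → Ω → ℂ) (hCmeas : ∀ k, Measurable (C k))
    (hCindep : iIndepFun C P)
    (hCdist : ∀ k, Measure.map (C k) P = (M'.card : ℝ≥0∞)⁻¹ • ∑ y ∈ M', Measure.dirac y)
    (xstar : (N : ℕ) → (Fin N → ℂ) → Fin N → ℝ)
    (hxsign : ∀ N, ∀ c : Fin N → ℂ, (∀ k, c k ∈ M') →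
      ∀ k, xstar N c k = 1 ∨ xstar N c k = -1)
    (hxguar : ∀ N, ∀ c : Fin N → ℂ, (∀ k, c k ∈ M') →
      srcm L σb (fun k => c k * (xstar N c k : ℂ)) ≤
        ((2 : ℝ) ^ N)⁻¹ *
          ∑ ε : Fin N → Bool, srcm L σb (fun k => c k * (if ε k then 1 else -1))) :
    ∀ᵐ ω ∂P,
      Filter.limsup
        (fun N : ℕ =>
          srcm L σb (fun k : Fin N => C k ω * (xstar N (fun k' => C k' ω) k : ℂ)))
        Filter.atTop ≤ 6 := by
  classical
  have hcard : 0 < M'.card := Finset.card_pos.mpr hM'ne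
  -- almost surely all coordinates lie in M'
  have hmemb : ∀ᵐ ω ∂P, ∀ k, C k ω ∈ M' := by
    rw [ae_all_iff]
    intro k
    have hms : MeasurableSet (↑M' : Set ℂ) := M'.measurableSet
    have hzero : P (C k ⁻¹' (↑M' : Set ℂ)ᶜ) = 0 := by
      rw [← Measure.map_apply (hCmeas k) hms.compl, hCdist k, Measure.smul_apply]
      have h0 : (∑ y ∈ M', Measure.dirac y) ((↑M' : Set ℂ)ᶜ) = 0 := by
        rw [Measure.finset_sum_apply]
        refine Finset.sum_eq_zero fun y hy => ?_
        rw [Measure.dirac_apply' _ hms.compl]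
        simp [hy]
      rw [h0, smul_zero]
    rw [ae_iff]
    have hsets : {ω | ¬ C k ω ∈ M'} = C k ⁻¹' (↑M' : Set ℂ)ᶜ := by
      ext ω; simp
    rw [hsets]
    exact hzero
  -- strong law of large numbers for |C k|^2
  set g : ℂ → ℝ := fun z => ‖z‖ ^ 2 with hgdef
  have hgm : Measurable g := (measurable_norm).pow_const 2
  set X : ℕ → Ω → ℝ := fun i ω => ‖C i ω‖ ^ 2 with hXdef
  have hXg : ∀ i, X i = g ∘ C i := fun i => rfl
  have hident : ∀ i, IdentDistrib (X i) (X 0) P P := by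
    intro i
    have h0 : IdentDistrib (C i) (C 0) P P :=
      ⟨(hCmeas i).aemeasurable, (hCmeas 0).aemeasurable, by rw [hCdist i, hCdist 0]⟩
    exact h0.comp hgm
  have hindep : Pairwise (Function.onFun (IndepFun · · P) X) := by
    intro i j hij
    exact (hCindep.indepFun hij).comp hgm hgm
  have hcardE : ((M'.card : ℝ≥0∞))⁻¹ ≠ ⊤ := by
    simp [ENNReal.inv_ne_top, Nat.cast_ne_zero, hcard.ne']
  have hdint : ∀ y ∈ M', Integrable g (Measure.dirac y) :=
    fun y _ => integrable_dirac_real hgm y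
  have hint : Integrable (X 0) P := by
    have hintg : Integrable g (Measure.map (C 0) P) := by
      rw [hCdist 0]
      refine Integrable.smul_measure ?_ hcardE
      rw [integrable_finset_sum_measure]
      exact hdint
    rw [hXg 0]
    exact (integrable_map_measure hgm.aestronglyMeasurable (hCmeas 0).aemeasurable).mp hintg
  have hEX : ∫ ω, X 0 ω ∂P = σb ^ 2 := by
    have h1 : ∫ ω, X 0 ω ∂P = ∫ z, g z ∂(Measure.map (C 0) P) :=
      (integral_map (hCmeas 0).aemeasurable hgm.aestronglyMeasurable).symm
    rw [h1, hCdist 0, integral_smul_measure, integral_finset_sum_measure hdint]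
    have h2 : ∀ y ∈ M', ∫ z, g z ∂(Measure.dirac y) = ‖y‖ ^ 2 := fun y _ => by
      rw [integral_dirac]
    rw [Finset.sum_congr rfl h2]
    rw [ENNReal.toReal_inv, ENNReal.toReal_natCast, smul_eq_mul, hσb2]
  have hSLLN := strong_law_ae_real X hint hindep hident
  rw [show P[X 0] = σb ^ 2 from hEX] at hSLLN
  -- combine
  filter_upwards [hmemb, hSLLN] with ω hmem htend
  set sq : ℕ → ℝ := fun n => ∑ i ∈ Finset.range n, ‖C i ω‖ ^ 2 with hsqdef
  set B : ℝ := ∑ y ∈ M', ‖y‖ ^ 2 with hBdef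
  have hB0 : 0 ≤ B := Finset.sum_nonneg fun y _ => by positivity
  have hBy : ∀ z : ℂ, z ∈ M' → ‖z‖ ^ 2 ≤ B := by
    intro z hz
    exact Finset.single_le_sum (f := fun y => ‖y‖ ^ 2) (fun y _ => by positivity) hz
  set K : ℝ := 37 * B ^ 3 / σb ^ 6 with hKdef
  set f : ℕ → ℝ := fun N => srcm L σb
    (fun k : Fin N => C k ω * (xstar N (fun k' => C k' ω) k : ℂ)) with hfdef
  set gfun : ℕ → ℝ := fun n => 6 * ((sq n / n) / σb ^ 2) ^ 3 + K / n with hgfdef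
  have hfg : ∀ n : ℕ, 1 ≤ n → f n ≤ gfun n := by
    intro n hn
    have hNpos : 0 < n := hn
    have hrn : (0:ℝ) < (n : ℝ) := by exact_mod_cast hNpos
    set rn : ℝ := (n : ℝ) with hrndef
    set ρ : ℝ := (σb ^ 2 * rn)⁻¹ with hρdef
    have hρ0 : 0 ≤ ρ := by positivity
    set c : Fin n → ℂ := fun k => C k ω with hcdef
    have hc : ∀ k, c k ∈ M' := fun k => hmem k
    have step1 : f n ≤ ((2:ℝ) ^ n)⁻¹ * ∑ ε : Fin n → Bool,
        srcm L σb (fun k => c k * (if ε k then 1 else -1)) := hxguar n c hc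
    have step2 := srcm_avg L hL σb hσb hNpos c
    have hS2 : ∑ k : Fin n, ‖c k‖ ^ 2 = sq n := by
      rw [hsqdef, hcdef]
      exact Fin.sum_univ_eq_sum_range (fun i => ‖C i ω‖ ^ 2) n
    have hS2n : 0 ≤ sq n := Finset.sum_nonneg fun i _ => by positivity
    have hS2b : sq n ≤ rn * B := by
      rw [← hS2]
      calc ∑ k : Fin n, ‖c k‖ ^ 2 ≤ ∑ k : Fin n, B :=
            Finset.sum_le_sum fun k _ => hBy _ (hc k)
        _ = rn * B := by rw [Finset.sum_const, Finset.card_univ, Fintype.card_fin,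
              nsmul_eq_mul]
    have hS4b : ∑ k : Fin n, ‖c k‖ ^ 4 ≤ rn * B ^ 2 := by
      calc ∑ k : Fin n, ‖c k‖ ^ 4 ≤ ∑ k : Fin n, B ^ 2 := by
            refine Finset.sum_le_sum fun k _ => ?_
            have h1 := hBy _ (hc k)
            have h2 : (0:ℝ) ≤ ‖c k‖ ^ 2 := by positivity
            calc ‖c k‖ ^ 4 = (‖c k‖ ^ 2) ^ 2 := by ring
              _ ≤ B ^ 2 := pow_le_pow_left₀ h2 h1 2
        _ = rn * B ^ 2 := by rw [Finset.sum_const, Finset.card_univ, Fintype.card_fin,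
              nsmul_eq_mul]
    have hS6b : ∑ k : Fin n, ‖c k‖ ^ 6 ≤ rn * B ^ 3 := by
      calc ∑ k : Fin n, ‖c k‖ ^ 6 ≤ ∑ k : Fin n, B ^ 3 := by
            refine Finset.sum_le_sum fun k _ => ?_
            have h1 := hBy _ (hc k)
            have h2 : (0:ℝ) ≤ ‖c k‖ ^ 2 := by positivity
            calc ‖c k‖ ^ 6 = (‖c k‖ ^ 2) ^ 3 := by ring
              _ ≤ B ^ 3 := pow_le_pow_left₀ h2 h1 3
        _ = rn * B ^ 3 := by rw [Finset.sum_const, Finset.card_univ, Fintype.card_fin,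
              nsmul_eq_mul]
    have hS4n : 0 ≤ ∑ k : Fin n, ‖c k‖ ^ 4 := Finset.sum_nonneg fun k _ => by positivity
    have hS6n : 0 ≤ ∑ k : Fin n, ‖c k‖ ^ 6 := Finset.sum_nonneg fun k _ => by positivity
    -- main term equality
    have hmain : 6 * ((sq n) * ρ) ^ 3 = 6 * ((sq n / rn) / σb ^ 2) ^ 3 := by
      rw [hρdef]
      congr 1
      rw [div_div, mul_inv]
      ring
    -- remainder bound
    have hrem : 21 * ((sq n) * ρ) * ((∑ k : Fin n, ‖c k‖ ^ 4) * ρ ^ 2)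
        + 16 * ((∑ k : Fin n, ‖c k‖ ^ 6) * ρ ^ 3) ≤ K / rn := by
      have h2 : sq n * ρ ≤ B / σb ^ 2 := by
        calc sq n * ρ ≤ (rn * B) * ρ := mul_le_mul_of_nonneg_right hS2b hρ0
          _ = B / σb ^ 2 := by rw [hρdef]; field_simp
      have h4 : (∑ k : Fin n, ‖c k‖ ^ 4) * ρ ^ 2 ≤ B ^ 2 / (σb ^ 4 * rn) := by
        calc (∑ k : Fin n, ‖c k‖ ^ 4) * ρ ^ 2 ≤ (rn * B ^ 2) * ρ ^ 2 :=
              mul_le_mul_of_nonneg_right hS4b (by positivity)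
          _ = B ^ 2 / (σb ^ 4 * rn) := by rw [hρdef]; field_simp
      have h6 : (∑ k : Fin n, ‖c k‖ ^ 6) * ρ ^ 3 ≤ B ^ 3 / (σb ^ 6 * rn) := by
        have hrn1 : (1:ℝ) ≤ rn := by rw [hrndef]; exact_mod_cast hn
        calc (∑ k : Fin n, ‖c k‖ ^ 6) * ρ ^ 3 ≤ (rn * B ^ 3) * ρ ^ 3 :=
              mul_le_mul_of_nonneg_right hS6b (by positivity)
          _ = B ^ 3 / (σb ^ 6 * rn ^ 2) := by rw [hρdef]; field_simp
          _ ≤ B ^ 3 / (σb ^ 6 * rn) := by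
              apply div_le_div_of_nonneg_left (by positivity) (by positivity)
              have h7 : rn ≤ rn ^ 2 := by nlinarith
              nlinarith [pow_nonneg (le_of_lt hσb) 6, h7]
      have hx2 : 0 ≤ sq n * ρ := mul_nonneg hS2n hρ0
      have hx4 : 0 ≤ (∑ k : Fin n, ‖c k‖ ^ 4) * ρ ^ 2 := mul_nonneg hS4n (by positivity)
      have hprod : 21 * ((sq n) * ρ) * ((∑ k : Fin n, ‖c k‖ ^ 4) * ρ ^ 2)
          ≤ 21 * (B / σb ^ 2) * (B ^ 2 / (σb ^ 4 * rn)) := by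
        have hb2 : (0:ℝ) ≤ B / σb ^ 2 := by positivity
        nlinarith
      have heq : 21 * (B / σb ^ 2) * (B ^ 2 / (σb ^ 4 * rn)) + 16 * (B ^ 3 / (σb ^ 6 * rn))
          = K / rn := by
        rw [hKdef]
        field_simp
        ring
      linarith
    calc f n ≤ ((2:ℝ) ^ n)⁻¹ * ∑ ε : Fin n → Bool,
          srcm L σb (fun k => c k * (if ε k then 1 else -1)) := step1
      _ ≤ 6 * ((∑ k : Fin n, ‖c k‖ ^ 2) * (σb ^ 2 * (n : ℝ))⁻¹) ^ 3
          + 21 * ((∑ k : Fin n, ‖c k‖ ^ 2) * (σb ^ 2 * (n : ℝ))⁻¹)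
              * ((∑ k : Fin n, ‖c k‖ ^ 4) * ((σb ^ 2 * (n : ℝ))⁻¹) ^ 2)
          + 16 * ((∑ k : Fin n, ‖c k‖ ^ 6) * ((σb ^ 2 * (n : ℝ))⁻¹) ^ 3) := step2
      _ = 6 * ((sq n) * ρ) ^ 3
          + (21 * ((sq n) * ρ) * ((∑ k : Fin n, ‖c k‖ ^ 4) * ρ ^ 2)
            + 16 * ((∑ k : Fin n, ‖c k‖ ^ 6) * ρ ^ 3)) := by
          rw [hS2, hρdef, hrndef]
          ring
      _ ≤ 6 * ((sq n / rn) / σb ^ 2) ^ 3 + K / rn := by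
          rw [← hmain]
          linarith
      _ = gfun n := by rw [hgfdef]
  -- tendsto of the majorant
  have hgt : Filter.Tendsto gfun Filter.atTop (nhds 6) := by
    have h2 : Filter.Tendsto (fun n : ℕ => (sq n / n) / σb ^ 2) Filter.atTop
        (nhds (σb ^ 2 / σb ^ 2)) := htend.div_const _
    rw [div_self (by positivity : (σb:ℝ) ^ 2 ≠ 0)] at h2
    have h3 := h2.pow 3
    have h4 := h3.const_mul (6:ℝ)
    have h5 := tendsto_const_div_atTop_nhds_zero_nat K
    have h6 := h4.add h5
    norm_num at h6
    exact h6
  have hev : f ≤ᶠ[Filter.atTop] gfun := Filter.eventually_atTop.mpr ⟨1, hfg⟩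
  have hcob : Filter.IsCoboundedUnder (· ≤ ·) Filter.atTop f :=
    Filter.isCoboundedUnder_le_of_le Filter.atTop (x := 0) fun n => srcm_nonneg L σb _
  have hbdd : Filter.IsBoundedUnder (· ≤ ·) Filter.atTop gfun := hgt.isBoundedUnder_le
  exact le_trans (Filter.limsup_le_limsup hev hcob hbdd) (le_of_eq hgt.limsup_eq)
end

section
/- Almost surely, lim_{N→∞} E_X[ (ŝ_i(n_N, (C_0,…,C_{N−1}) ⊙ Y^{(N)}))² ] = (1−α)/2, where E_X denotes expectation over the random signs X_{j_N+1},…,X_{N−1} only (i.e., conditional expectation given (C_k)). -/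
open MeasureTheory ProbabilityTheory Filter Finset
open scoped ENNReal NNReal Topology

set_option linter.unusedSectionVars false
set_option linter.unusedVariables false
set_option maxHeartbeats 1000000


lemma my_integrable_dirac {α E : Type*} [MeasurableSpace α] [MeasurableSingletonClass α]
    [NormedAddCommGroup E] {f : α → E} (hf : StronglyMeasurable f) (a : α) :
    Integrable f (Measure.dirac a) := by
  refine ⟨hf.aestronglyMeasurable, ?_⟩
  rw [HasFiniteIntegral, lintegral_dirac' _ hf.enorm]
  exact enorm_lt_top

section X
variable {Ω₂ : Type*} [MeasurableSpace Ω₂] (ν : Measure Ω₂) [IsProbabilityMeasure ν]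
    (X : ℕ → Ω₂ → ℝ) (hXmeas : ∀ k, Measurable (X k))
    (hXdist : ∀ k, Measure.map (X k) ν =
      (2 : ℝ≥0∞)⁻¹ • (Measure.dirac (1 : ℝ) + Measure.dirac (-1 : ℝ)))

include hXmeas hXdist in
lemma Xmoment (h : ℝ → ℝ) (hh : Measurable h) (k : ℕ) :
    ∫ ω, h (X k ω) ∂ν = (h 1 + h (-1)) / 2 := by
  rw [← integral_map (hXmeas k).aemeasurable hh.aestronglyMeasurable, hXdist k,
    integral_smul_measure, integral_add_measure (my_integrable_dirac hh.stronglyMeasurable 1)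
      (my_integrable_dirac hh.stronglyMeasurable (-1))]
  simp [integral_dirac, ENNReal.toReal_inv, smul_eq_mul]
  ring

include hXmeas hXdist in
lemma Xbdd (k : ℕ) : ∀ᵐ ω ∂ν, |X k ω| ≤ 1 := by
  have hms : MeasurableSet ({1, -1} : Set ℝ)ᶜ := (Set.Finite.measurableSet (by simp)).compl
  have : ν (X k ⁻¹' ({1, -1} : Set ℝ)ᶜ) = 0 := by
    rw [← Measure.map_apply (hXmeas k) hms, hXdist k]
    simp only [Measure.smul_apply, Measure.coe_add, Pi.add_apply, smul_eq_mul]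
    rw [Measure.dirac_apply' _ hms, Measure.dirac_apply' _ hms]
    simp
  filter_upwards [measure_eq_zero_iff_ae_notMem.mp this] with ω hω
  have : X k ω = 1 ∨ X k ω = -1 := by
    by_cases h1 : X k ω = 1
    · exact Or.inl h1
    · exact Or.inr ((by simpa [Set.mem_preimage] using hω : ¬X k ω = 1 → X k ω = -1) h1)
  rcases this with h | h <;> simp [h]

include hXmeas hXdist in
lemma Xint (k : ℕ) : Integrable (X k) ν :=
  ⟨(hXmeas k).aestronglyMeasurable, HasFiniteIntegral.of_bounded (C := 1)
    ((Xbdd ν X hXmeas hXdist k).mono fun ω h => by simpa using h)⟩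

variable (hXindep : iIndepFun X ν)

include hXmeas hXdist hXindep in
/-- Part I: variance of an affine function of the signs. -/
lemma variance_linear (T : Finset ℕ) (u : ℕ → ℝ) (c : ℝ) :
    ∫ ω₂, ((c + ∑ k ∈ T, u k * X k ω₂) -
      ∫ ω₂', (c + ∑ k ∈ T, u k * X k ω₂') ∂ν) ^ 2 ∂ν = ∑ k ∈ T, (u k) ^ 2 := by
  have hX0 : ∀ k, ∫ ω, X k ω ∂ν = 0 := by
    intro k
    simpa using Xmoment ν X hXmeas hXdist id measurable_id k
  have hint : ∀ k, Integrable (fun ω => u k * X k ω) ν :=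
    fun k => (Xint ν X hXmeas hXdist k).const_mul _
  have hmean : ∫ ω₂', (c + ∑ k ∈ T, u k * X k ω₂') ∂ν = c := by
    rw [integral_add (integrable_const c) (integrable_finset_sum _ fun k _ => hint k),
      integral_finset_sum _ fun k _ => hint k]
    simp only [integral_const_mul, hX0, mul_zero, Finset.sum_const_zero]
    simp
  rw [hmean]
  have hcore : ∀ ω₂, ((c + ∑ k ∈ T, u k * X k ω₂) - c) ^ 2
      = ∑ j ∈ T, ∑ k ∈ T, (u j * u k) * (X j ω₂ * X k ω₂) := by
    intro ω₂
    rw [add_sub_cancel_left, sq, Finset.sum_mul_sum]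
    exact Finset.sum_congr rfl fun j _ => Finset.sum_congr rfl fun k _ => by ring
  simp only [hcore]
  have hintprod : ∀ j k : ℕ, Integrable (fun ω => X j ω * X k ω) ν := by
    intro j k
    refine ⟨((hXmeas j).mul (hXmeas k)).aestronglyMeasurable,
      HasFiniteIntegral.of_bounded (C := 1) ?_⟩
    filter_upwards [Xbdd ν X hXmeas hXdist j, Xbdd ν X hXmeas hXdist k] with ω h1 h2
    calc ‖X j ω * X k ω‖ = |X j ω| * |X k ω| := abs_mul _ _
    _ ≤ 1 * 1 := mul_le_mul h1 h2 (abs_nonneg _) zero_le_one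
    _ = 1 := one_mul 1
  have hXX : ∀ j k : ℕ, ∫ ω, X j ω * X k ω ∂ν = if j = k then 1 else 0 := by
    intro j k
    split_ifs with h
    · subst h
      have := Xmoment ν X hXmeas hXdist (fun y => y * y) (measurable_id.mul measurable_id) j
      simpa using this
    · have := (hXindep.indepFun h).integral_mul_eq_mul_integral
        (Xint ν X hXmeas hXdist j).aestronglyMeasurable (Xint ν X hXmeas hXdist k).aestronglyMeasurable
      have e : (fun ω => X j ω * X k ω) = X j * X k := rfl
      rw [e, this]
      rw [show integral ν (X j) = ∫ ω, X j ω ∂ν from rfl, hX0, zero_mul]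
  rw [integral_finset_sum _ fun j _ =>
    integrable_finset_sum _ fun k _ => ((hintprod j k).const_mul _)]
  have : ∀ j ∈ T, ∫ ω₂, ∑ k ∈ T, (u j * u k) * (X j ω₂ * X k ω₂) ∂ν
      = ∑ k ∈ T, (u j * u k) * (if j = k then (1:ℝ) else 0) := by
    intro j _
    rw [integral_finset_sum _ fun k _ => ((hintprod j k).const_mul _)]
    exact Finset.sum_congr rfl fun k _ => by rw [integral_const_mul, hXX]
  rw [Finset.sum_congr rfl this]
  refine Finset.sum_congr rfl fun j hj => ?_
  rw [Finset.sum_eq_single j]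
  · simp [sq]
  · intro k _ hkj; simp [Ne.symm hkj]
  · intro h; exact absurd hj h

end X


-- Combinatorial claim: for "good" tuples each value appears at least twice,
-- so all values off p 0 coincide.
lemma good_two_vals {p : Fin 4 → ℕ} (hp : ∀ i₀, ∃ i, i ≠ i₀ ∧ p i = p i₀)
    {i i' : Fin 4} (hi : p i ≠ p 0) (hi' : p i' ≠ p 0) : p i = p i' := by
  by_contra hne
  have hcard : ∀ v : Fin 4, 2 ≤ #(univ.filter (fun j => p j = p v)) := by
    intro v
    obtain ⟨i'', hne'', heq''⟩ := hp v
    exact Finset.one_lt_card.mpr ⟨i'', by simp [heq''], v, by simp, hne''⟩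
  have hdisj : ∀ a b : Fin 4, p a ≠ p b →
      Disjoint (univ.filter (fun j => p j = p a)) (univ.filter (fun j => p j = p b)) := by
    intro a b hab
    rw [Finset.disjoint_left]
    intro j hja hjb
    simp only [Finset.mem_filter] at hja hjb
    exact hab (hja.2 ▸ hjb.2 ▸ rfl)
  have h1 := hcard 0
  have h2 := hcard i
  have h3 := hcard i'
  set S0 := univ.filter (fun j => p j = p 0)
  set Si := univ.filter (fun j => p j = p i)
  set Si' := univ.filter (fun j => p j = p i')
  have d1 : Disjoint S0 Si := hdisj 0 i (Ne.symm hi)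
  have d2 : Disjoint S0 Si' := hdisj 0 i' (Ne.symm hi')
  have d3 : Disjoint Si Si' := hdisj i i' hne
  have hunion : #(S0 ∪ Si ∪ Si') ≤ 4 := by
    have := Finset.card_le_card (Finset.subset_univ (α := Fin 4) (S0 ∪ Si ∪ Si'))
    simpa using this
  rw [Finset.card_union_of_disjoint (by
      rw [Finset.disjoint_union_left]; exact ⟨d2, d3⟩),
    Finset.card_union_of_disjoint d1] at hunion
  omega

lemma card_good_le (T : Finset ℕ) :
    #((Fintype.piFinset (fun _ : Fin 4 => T)).filter
        (fun p => ∀ i₀, ∃ i, i ≠ i₀ ∧ p i = p i₀)) ≤ 16 * #T ^ 2 := by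
  classical
  set Good := (Fintype.piFinset (fun _ : Fin 4 => T)).filter
    (fun p => ∀ i₀, ∃ i, i ≠ i₀ ∧ p i = p i₀) with hGood
  have hinj : Set.InjOn
      (fun p : Fin 4 → ℕ => ((p 0,
        if h : ∃ i, p i ≠ p 0 then p h.choose else p 0),
        fun i => decide (p i = p 0))) Good := by
    intro p hp q hq hpq
    simp only [Finset.coe_filter, Set.mem_setOf_eq, hGood, Finset.mem_filter] at hp hq
    obtain ⟨-, hp2⟩ := hp
    obtain ⟨-, hq2⟩ := hq
    simp only [Prod.mk.injEq] at hpq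
    obtain ⟨⟨h0, hsec⟩, hpat⟩ := hpq
    funext i
    have hpati : decide (p i = p 0) = decide (q i = q 0) := congrFun hpat i
    by_cases hc : p i = p 0
    · have : q i = q 0 := by
        have := hpati ▸ (decide_eq_true hc)
        exact of_decide_eq_true ((decide_eq_true hc) ▸ hpati.symm)
      rw [hc, h0, ← this]
    · have hqc : ¬ q i = q 0 := by
        intro h
        exact hc (of_decide_eq_true (hpati ▸ decide_eq_true h))
      have hep : ∃ j, p j ≠ p 0 := ⟨i, hc⟩
      have heq : ∃ j, q j ≠ q 0 := ⟨i, hqc⟩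
      rw [dif_pos hep] at hsec
      rw [dif_pos heq] at hsec
      have e1 : p i = p hep.choose := good_two_vals hp2 hc hep.choose_spec
      have e2 : q i = q heq.choose := good_two_vals hq2 hqc heq.choose_spec
      rw [e1, hsec, ← e2]
  have hmaps : ∀ p ∈ Good, ((p 0,
        if h : ∃ i, p i ≠ p 0 then p h.choose else p 0),
        fun i => decide (p i = p 0)) ∈ (T ×ˢ T) ×ˢ (Finset.univ : Finset (Fin 4 → Bool)) := by
    intro p hp
    simp only [hGood, Finset.mem_filter, Fintype.mem_piFinset] at hp
    simp only [Finset.mem_product, Finset.mem_univ, and_true]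
    refine ⟨hp.1 0, ?_⟩
    split_ifs with h
    · exact hp.1 h.choose
    · exact hp.1 0
  have := Finset.card_le_card_of_injOn _ hmaps hinj
  calc #Good ≤ #((T ×ˢ T) ×ˢ (Finset.univ : Finset (Fin 4 → Bool))) := this
  _ = 16 * #T ^ 2 := by
      simp [Finset.card_product, sq]
      ring


section C
variable {Ω₁ : Type*} [MeasurableSpace Ω₁] (μ : Measure Ω₁) [IsProbabilityMeasure μ]
    (M' : Finset ℂ) (C : ℕ → Ω₁ → ℂ) (hCmeas : ∀ k, Measurable (C k))
    (hCdist : ∀ k, Measure.map (C k) μ = (M'.card : ℝ≥0∞)⁻¹ • ∑ y ∈ M', Measure.dirac y)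

include hCmeas hCdist in
lemma Cmoment (h : ℂ → ℝ) (hh : Measurable h) (k : ℕ) :
    ∫ ω, h (C k ω) ∂μ = (M'.card : ℝ)⁻¹ * ∑ y ∈ M', h y := by
  rw [← integral_map (hCmeas k).aemeasurable hh.aestronglyMeasurable, hCdist k,
    integral_smul_measure, integral_finset_sum_measure
      (fun y _ => my_integrable_dirac hh.stronglyMeasurable y)]
  simp [integral_dirac, ENNReal.toReal_inv, smul_eq_mul]

include hCmeas hCdist in
lemma CaeMem (k : ℕ) : ∀ᵐ ω ∂μ, C k ω ∈ M' := by
  have hms : MeasurableSet ((↑M' : Set ℂ)ᶜ) := (M'.measurableSet).compl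
  have : μ (C k ⁻¹' (↑M' : Set ℂ)ᶜ) = 0 := by
    rw [← Measure.map_apply (hCmeas k) hms, hCdist k]
    simp only [Measure.smul_apply, Measure.coe_finset_sum, Finset.sum_apply, smul_eq_mul]
    have h0 : ∀ y ∈ M', Measure.dirac y ((↑M' : Set ℂ)ᶜ) = 0 := by
      intro y hy
      rw [Measure.dirac_apply' _ hms]
      simp [hy]
    rw [Finset.sum_congr rfl h0]
    simp
  filter_upwards [measure_eq_zero_iff_ae_notMem.mp this] with ω hω
  simpa using hω

variable (hCindep : iIndepFun C μ)

include hCmeas hCdist hCindep in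
/-- Fourth-moment bound for sums of independent, mean-zero, bounded variables. -/
lemma fourth_moment (B : ℝ) (hB : 0 ≤ B) (g : ℕ → ℂ → ℝ)
    (hgmeas : ∀ k, Measurable (g k)) (hgbd : ∀ k, ∀ y ∈ M', |g k y| ≤ B)
    (hgsum : ∀ k, ∑ y ∈ M', g k y = 0) (T : Finset ℕ) :
    ∫ ω, (∑ k ∈ T, g k (C k ω)) ^ 4 ∂μ ≤ 16 * B ^ 4 * (#T : ℝ) ^ 2 := by
  classical
  set ξ : ℕ → Ω₁ → ℝ := fun k ω => g k (C k ω) with hξ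
  have hξmeas : ∀ k, Measurable (ξ k) := fun k => (hgmeas k).comp (hCmeas k)
  have hbd : ∀ᵐ ω ∂μ, ∀ k, |ξ k ω| ≤ B := by
    rw [ae_all_iff]
    intro k
    filter_upwards [CaeMem μ M' C hCmeas hCdist k] with ω hω using hgbd k _ hω
  have hmean : ∀ k, ∫ ω, ξ k ω ∂μ = 0 := by
    intro k
    rw [Cmoment μ M' C hCmeas hCdist (g k) (hgmeas k) k, hgsum k, mul_zero]
  have hIbdd : ∀ (f : Ω₁ → ℝ) (D : ℝ), Measurable f → (∀ᵐ ω ∂μ, |f ω| ≤ D) →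
      Integrable f μ := fun f D hm hb =>
    ⟨hm.aestronglyMeasurable, HasFiniteIntegral.of_bounded (hb.mono fun ω h => by simpa using h)⟩
  -- expand the fourth power
  have hexp : ∀ ω, (∑ k ∈ T, ξ k ω) ^ 4
      = ∑ p ∈ Fintype.piFinset (fun _ : Fin 4 => T), ∏ i, ξ (p i) ω := by
    intro ω
    rw [show (∑ k ∈ T, ξ k ω) ^ 4 = ∏ _i : Fin 4, ∑ k ∈ T, ξ k ω by
      simp [Finset.prod_const], Finset.prod_univ_sum]
  have hprodbd : ∀ p : Fin 4 → ℕ, ∀ᵐ ω ∂μ, |∏ i, ξ (p i) ω| ≤ B ^ 4 := by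
    intro p
    filter_upwards [hbd] with ω hω
    rw [Finset.abs_prod]
    calc ∏ i, |ξ (p i) ω| ≤ ∏ _i : Fin 4, B :=
      Finset.prod_le_prod (fun i _ => abs_nonneg _) (fun i _ => hω (p i))
    _ = B ^ 4 := by simp [Finset.prod_const]
  have hprodmeas : ∀ p : Fin 4 → ℕ, Measurable (fun ω => ∏ i, ξ (p i) ω) :=
    fun p => Finset.measurable_prod _ (fun i _ => hξmeas (p i))
  have hprodint : ∀ p : Fin 4 → ℕ, Integrable (fun ω => ∏ i, ξ (p i) ω) μ :=
    fun p => hIbdd _ _ (hprodmeas p) (hprodbd p)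
  -- vanishing of terms with a uniquely-occurring index
  have hvanish : ∀ p : Fin 4 → ℕ, (∃ i₀, ∀ i, p i = p i₀ → i = i₀) →
      ∫ ω, ∏ i, ξ (p i) ω ∂μ = 0 := by
    intro p ⟨i₀, hi₀⟩
    set a := p i₀ with ha
    set s := (Finset.univ.erase i₀).image p with hs
    set m : ℕ → ℕ := fun j => #((Finset.univ.erase i₀).filter (fun i => p i = j)) with hm
    set G : ℕ → ℂ → ℝ := fun j => if j = a then g a else fun y => (g j y) ^ (m j) with hG
    have hGmeas : ∀ j, Measurable (G j) := by
      intro j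
      by_cases h : j = a
      · simpa [hG, h] using hgmeas a
      · simpa [hG, h] using (hgmeas j).pow_const (m j)
    set η : ℕ → Ω₁ → ℝ := fun j ω => G j (C j ω) with hη
    have hηmeas : ∀ j, Measurable (η j) := fun j => (hGmeas j).comp (hCmeas j)
    have hηindep : iIndepFun η μ := hCindep.comp G hGmeas
    have hanotmem : a ∉ s := by
      simp only [hs, Finset.mem_image]
      rintro ⟨i, hi, hpi⟩
      have := hi₀ i hpi
      exact (Finset.mem_erase.mp hi).1 this
    have hindep : IndepFun (∏ j ∈ s, η j) (η a) μ :=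
      hηindep.indepFun_finsetProd_of_notMem hηmeas hanotmem
    have hsplit : (fun ω => ∏ i, ξ (p i) ω) = (∏ j ∈ s, η j) * η a := by
      funext ω
      have h1 : ∏ i, ξ (p i) ω = ξ (p i₀) ω * ∏ i ∈ Finset.univ.erase i₀, ξ (p i) ω :=
        (Finset.mul_prod_erase Finset.univ _ (Finset.mem_univ i₀)).symm
      have h2 : ∏ i ∈ Finset.univ.erase i₀, ξ (p i) ω
          = ∏ j ∈ s, (ξ j ω) ^ (m j) :=
        Finset.prod_comp (fun j => ξ j ω) p
      have h3 : ∀ j ∈ s, (ξ j ω) ^ (m j) = η j ω := by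
        intro j hj
        have hne : j ≠ a := fun h => hanotmem (h ▸ hj)
        simp [hη, hG, hne, hξ]
      have h4 : η a ω = ξ a ω := by simp [hη, hG, hξ]
      simp only [Pi.mul_apply, Finset.prod_apply]
      rw [h1, h2, Finset.prod_congr rfl h3, h4, mul_comm]
    have hηbd : ∀ j, ∀ᵐ ω ∂μ, |η j ω| ≤ if j = a then B else B ^ (m j) := by
      intro j
      filter_upwards [CaeMem μ M' C hCmeas hCdist j] with ω hω
      by_cases h : j = a
      · simp only [hη, hG, h, if_pos rfl]
        exact hgbd a _ (h ▸ hω)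
      · simp only [hη, hG, h, if_false]
        rw [abs_pow]
        exact pow_le_pow_left₀ (abs_nonneg _) (hgbd j _ hω) _
    have hηint : ∀ j, Integrable (η j) μ := fun j => hIbdd _ _ (hηmeas j) (hηbd j)
    have hprodηint : Integrable (∏ j ∈ s, η j) μ := by
      have hfe : (∏ j ∈ s, η j) = fun ω => ∏ j ∈ s, η j ω :=
        funext fun ω => Finset.prod_apply ω s η
      rw [hfe]
      refine hIbdd _ (∏ j ∈ s, if j = a then B else B ^ (m j))
        (Finset.measurable_prod _ fun j _ => hηmeas j) ?_
      have : ∀ᵐ ω ∂μ, ∀ j ∈ s, |η j ω| ≤ if j = a then B else B ^ (m j) :=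
        (ae_ball_iff (Finset.countable_toSet s)).mpr fun j _ => hηbd j
      filter_upwards [this] with ω hω
      rw [Finset.abs_prod]
      exact Finset.prod_le_prod (fun j _ => abs_nonneg _) hω
    rw [hsplit, hindep.integral_mul_eq_mul_integral hprodηint.aestronglyMeasurable (hηint a).aestronglyMeasurable]
    have : integral μ (η a) = 0 := by
      have : (η a) = ξ a := funext fun ω => by simp [hη, hG, hξ]
      rw [this]
      exact hmean a
    rw [this, mul_zero]
  -- main chain
  simp only [hξ] at hexp
  simp only [hexp]
  rw [integral_finset_sum _ fun p _ => hprodint p]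
  set P := Fintype.piFinset (fun _ : Fin 4 => T) with hP
  set Good := P.filter (fun p => ∀ i₀, ∃ i, i ≠ i₀ ∧ p i = p i₀) with hGoodDef
  have hzero : ∀ p ∈ P, p ∉ Good → ∫ ω, ∏ i, ξ (p i) ω ∂μ = 0 := by
    intro p hp hpg
    simp only [hGoodDef, Finset.mem_filter, hp, true_and, not_forall] at hpg
    obtain ⟨i₀, hi₀⟩ := hpg
    push_neg at hi₀
    refine hvanish p ⟨i₀, fun i hpi => ?_⟩
    by_contra hne
    exact (hi₀ i hne) hpi
  have hsum_eq : ∑ p ∈ P, ∫ ω, ∏ i, ξ (p i) ω ∂μ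
      = ∑ p ∈ Good, ∫ ω, ∏ i, ξ (p i) ω ∂μ := by
    rw [hGoodDef]
    exact (Finset.sum_filter_of_ne (fun p hp hne => by
      by_contra h
      exact hne (hzero p hp (by simp [hGoodDef, Finset.mem_filter, h])))).symm
  rw [hsum_eq]
  have hterm : ∀ p ∈ Good, ∫ ω, ∏ i, ξ (p i) ω ∂μ ≤ B ^ 4 := by
    intro p _
    calc ∫ ω, ∏ i, ξ (p i) ω ∂μ ≤ |∫ ω, ∏ i, ξ (p i) ω ∂μ| := le_abs_self _
    _ ≤ B ^ 4 := by
        have h1 := norm_integral_le_of_norm_le_const (C := B ^ 4) (μ := μ)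
          (f := fun ω => ∏ i, ξ (p i) ω)
          ((hprodbd p).mono fun ω h => by rw [Real.norm_eq_abs]; exact h)
        rw [Real.norm_eq_abs] at h1
        simpa [measure_univ] using h1
  calc ∑ p ∈ Good, ∫ ω, ∏ i, ξ (p i) ω ∂μ ≤ ∑ _p ∈ Good, B ^ 4 :=
    Finset.sum_le_sum hterm
  _ = #Good * B ^ 4 := by rw [Finset.sum_const, nsmul_eq_mul]
  _ ≤ (16 * #T ^ 2 : ℕ) * B ^ 4 := by
      have hcard : #Good ≤ 16 * #T ^ 2 := card_good_le T
      exact mul_le_mul_of_nonneg_right (by exact_mod_cast hcard) (by positivity)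
  _ = 16 * B ^ 4 * (#T : ℝ) ^ 2 := by push_cast; ring

end C

section BC
variable {Ω₁ : Type*} [MeasurableSpace Ω₁] (μ : Measure Ω₁) [IsProbabilityMeasure μ]
    (M' : Finset ℂ) (C : ℕ → Ω₁ → ℂ) (hCmeas : ∀ k, Measurable (C k))
    (hCdist : ∀ k, Measure.map (C k) μ = (M'.card : ℝ≥0∞)⁻¹ • ∑ y ∈ M', Measure.dirac y)
    (hCindep : iIndepFun C μ)

include hCmeas hCdist in
lemma CaeMem' (k : ℕ) : ∀ᵐ ω ∂μ, C k ω ∈ M' := by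
  have hms : MeasurableSet ((↑M' : Set ℂ)ᶜ) := (M'.measurableSet).compl
  have : μ (C k ⁻¹' (↑M' : Set ℂ)ᶜ) = 0 := by
    rw [← Measure.map_apply (hCmeas k) hms, hCdist k]
    simp only [Measure.smul_apply, Measure.coe_finset_sum, Finset.sum_apply, smul_eq_mul]
    have h0 : ∀ y ∈ M', Measure.dirac y ((↑M' : Set ℂ)ᶜ) = 0 := by
      intro y hy
      rw [Measure.dirac_apply' _ hms]
      simp [hy]
    rw [Finset.sum_congr rfl h0]
    simp
  filter_upwards [measure_eq_zero_iff_ae_notMem.mp this] with ω hω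
  simpa using hω

-- assume fourth_moment available (proved elsewhere)
variable (fourth_moment' : ∀ (B : ℝ), 0 ≤ B → ∀ (g : ℕ → ℂ → ℝ),
    (∀ k, Measurable (g k)) → (∀ k, ∀ y ∈ M', |g k y| ≤ B) →
    (∀ k, ∑ y ∈ M', g k y = 0) → ∀ (T : Finset ℕ),
    ∫ ω, (∑ k ∈ T, g k (C k ω)) ^ 4 ∂μ ≤ 16 * B ^ 4 * (#T : ℝ) ^ 2)

include hCmeas hCdist hCindep fourth_moment' in
lemma key_as (B : ℝ) (hB : 0 ≤ B) (g : ℕ → ℕ → ℂ → ℝ)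
    (hgmeas : ∀ N k, Measurable (g N k)) (hgbd : ∀ N k, ∀ y ∈ M', |g N k y| ≤ B)
    (hgsum : ∀ N k, ∑ y ∈ M', g N k y = 0) (T : ℕ → Finset ℕ) (hT : ∀ N, #(T N) ≤ N) :
    ∀ᵐ ω ∂μ, Tendsto (fun N => (∑ k ∈ T N, g N k (C k ω)) / N) atTop (𝓝 0) := by
  classical
  set S : ℕ → Ω₁ → ℝ := fun N ω => ∑ k ∈ T N, g N k (C k ω) with hS
  have hSmeas : ∀ N, Measurable (S N) :=
    fun N => Finset.measurable_sum _ fun k _ => (hgmeas N k).comp (hCmeas k)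
  have hS4 : ∀ N : ℕ, ∫ ω, (S N ω) ^ 4 ∂μ ≤ 16 * B ^ 4 * (N : ℝ) ^ 2 := by
    intro N
    calc ∫ ω, (S N ω) ^ 4 ∂μ ≤ 16 * B ^ 4 * (#(T N) : ℝ) ^ 2 :=
      fourth_moment' B hB (g N) (hgmeas N) (hgbd N) (hgsum N) (T N)
    _ ≤ 16 * B ^ 4 * (N : ℝ) ^ 2 := by
        have : (#(T N) : ℝ) ≤ (N : ℝ) := by exact_mod_cast hT N
        have h2 : (#(T N) : ℝ) ^ 2 ≤ (N : ℝ) ^ 2 :=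
          pow_le_pow_left₀ (by positivity) this 2
        exact mul_le_mul_of_nonneg_left h2 (by positivity)
  -- for each ε > 0 a.e. eventually |S N / N| < ε
  have hmain : ∀ ε : ℝ, 0 < ε → ∀ᵐ ω ∂μ, ∀ᶠ N in atTop, ¬ (ε ≤ |S N ω / N|) := by
    intro ε hε
    set A : ℕ → Set Ω₁ := fun N => {ω | ε ≤ |S N ω / N|} with hA
    have hμA : ∀ N : ℕ, μ (A N) ≤ ENNReal.ofReal (16 * B ^ 4 / ε ^ 4 * ((N:ℝ) ^ 2)⁻¹) := by
      intro N
      rcases Nat.eq_zero_or_pos N with h0 | hpos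
      · subst h0
        have : A 0 = ∅ := by
          ext ω
          have hT0 : T 0 = ∅ := Finset.card_eq_zero.mp (Nat.le_zero.mp (hT 0))
          simp [hA, hS, hT0, not_le, hε]
        simp [this]
      · have hsub : A N ⊆ {ω | ε ^ 4 * (N:ℝ) ^ 4 ≤ (S N ω) ^ 4} := by
          intro ω hω
          simp only [hA, Set.mem_setOf_eq, abs_div, abs_of_nonneg (by positivity : (0:ℝ) ≤ (N:ℝ))] at hω ⊢
          have hN : (0:ℝ) < N := by exact_mod_cast hpos
          have h1 : ε * N ≤ |S N ω| := by
            rw [le_div_iff₀ hN] at hω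
            exact hω
          have h2 : (ε * N) ^ 4 ≤ |S N ω| ^ 4 :=
            pow_le_pow_left₀ (by positivity) h1 4
          calc ε ^ 4 * (N:ℝ) ^ 4 = (ε * N) ^ 4 := by ring
          _ ≤ |S N ω| ^ 4 := h2
          _ = (S N ω) ^ 4 := by rw [← abs_pow, abs_of_nonneg (by positivity)]
        have hbdS : ∀ᵐ ω ∂μ, |S N ω| ≤ (#(T N) : ℝ) * B := by
          have hmem : ∀ᵐ ω ∂μ, ∀ k : ℕ, C k ω ∈ M' :=
            ae_all_iff.mpr fun k => CaeMem' μ M' C hCmeas hCdist k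
          filter_upwards [hmem] with ω hω
          calc |S N ω| ≤ ∑ k ∈ T N, |g N k (C k ω)| := Finset.abs_sum_le_sum_abs _ _
          _ ≤ ∑ _k ∈ T N, B := Finset.sum_le_sum fun k _ => hgbd N k _ (hω k)
          _ = (#(T N) : ℝ) * B := by rw [Finset.sum_const, nsmul_eq_mul]
        have hint : Integrable (fun ω => (S N ω) ^ 4) μ := by
          refine ⟨((hSmeas N).pow_const 4).aestronglyMeasurable,
            HasFiniteIntegral.of_bounded (C := ((#(T N) : ℝ) * B) ^ 4) ?_⟩
          filter_upwards [hbdS] with ω hω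
          rw [Real.norm_eq_abs, abs_pow]
          exact pow_le_pow_left₀ (abs_nonneg _) hω 4
        have hmar := mul_meas_ge_le_integral_of_nonneg
          (ae_of_all μ fun ω => by positivity : 0 ≤ᵐ[μ] fun ω => (S N ω) ^ 4) hint
          (ε ^ 4 * (N:ℝ) ^ 4)
        have hN : (0:ℝ) < N := by exact_mod_cast hpos
        have hmono : μ (A N) ≤ μ {ω | ε ^ 4 * (N:ℝ) ^ 4 ≤ (S N ω) ^ 4} := measure_mono hsub
        have htoReal : (μ (A N)).toReal ≤ 16 * B ^ 4 / ε ^ 4 * ((N:ℝ) ^ 2)⁻¹ := by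
          have hA_le : (μ (A N)).toReal ≤ (μ {ω | ε ^ 4 * (N:ℝ) ^ 4 ≤ (S N ω) ^ 4}).toReal :=
            ENNReal.toReal_mono (measure_ne_top μ _) hmono
          have hpos4 : (0:ℝ) < ε ^ 4 * (N:ℝ) ^ 4 := by positivity
          have := le_trans hmar (hS4 N)
          have h5 : (μ {ω | ε ^ 4 * (N:ℝ) ^ 4 ≤ (S N ω) ^ 4}).toReal
              ≤ 16 * B ^ 4 * (N : ℝ) ^ 2 / (ε ^ 4 * (N:ℝ) ^ 4) := by
            rw [le_div_iff₀ hpos4]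
            calc (μ _).toReal * (ε ^ 4 * (N:ℝ) ^ 4)
                = ε ^ 4 * (N:ℝ) ^ 4 * (μ _).toReal := by ring
            _ ≤ 16 * B ^ 4 * (N : ℝ) ^ 2 := this
          refine le_trans (le_trans hA_le h5) (le_of_eq ?_)
          field_simp
        rw [← ENNReal.ofReal_toReal (measure_ne_top μ (A N))]
        exact ENNReal.ofReal_le_ofReal htoReal
    have hsummable : Summable (fun N : ℕ => 16 * B ^ 4 / ε ^ 4 * ((N:ℝ) ^ 2)⁻¹) := by
      have h1 : Summable (fun N : ℕ => ((N:ℝ) ^ 2)⁻¹) := by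
        have := Real.summable_one_div_nat_pow.mpr (by norm_num : 1 < 2)
        simpa [one_div] using this
      exact h1.mul_left _
    have htsum : (∑' N, μ (A N)) ≠ ∞ := by
      refine ne_top_of_le_ne_top ?_ (ENNReal.tsum_le_tsum hμA)
      rw [← ENNReal.ofReal_tsum_of_nonneg (fun N => by positivity) hsummable]
      exact ENNReal.ofReal_ne_top
    filter_upwards [ae_eventually_notMem htsum] with ω hω
    exact hω
  have hae : ∀ᵐ ω ∂μ, ∀ m : ℕ, ∀ᶠ N in atTop, ¬ ((1 / (m + 1) : ℝ) ≤ |S N ω / N|) := by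
    rw [ae_all_iff]
    intro m
    exact hmain (1 / (m + 1)) (by positivity)
  filter_upwards [hae] with ω hω
  rw [NormedAddCommGroup.tendsto_nhds_zero]
  intro ε hε
  obtain ⟨m, hm⟩ := exists_nat_one_div_lt hε
  filter_upwards [hω m] with N hN
  rw [Real.norm_eq_abs]
  push_neg at hN
  calc |S N ω / N| < 1 / (m + 1) := hN
  _ < ε := by exact_mod_cast hm
end BC


/-- The signal sample `s(n, (C_0,…,C_{N−1}) ⊙ Y^{(N)})` where
`Y^{(N)} = (x_0^{(N)},…,x_{j_N}^{(N)}, X_{j_N+1},…,X_{N−1})`: the fixed signs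
`x N` may depend on `C_0,…,C_{j_N}` (encoded by feeding `x` the data sequence truncated
after index `j_N`), the random signs `X` live on a second probability space. -/
noncomputable def ofdmSignedData {Ω₁ Ω₂ : Type*} (L : ℕ) (σb : ℝ) (jN : ℕ → ℕ)
    (C : ℕ → Ω₁ → ℂ) (x : (N : ℕ) → (ℕ → ℂ) → ℕ → ℝ) (X : ℕ → Ω₂ → ℝ)
    (N n : ℕ) (ω₁ : Ω₁) (ω₂ : Ω₂) : ℂ :=
  ofdm L σb (fun k : Fin N =>
    C k ω₁ * (((if (k : ℕ) ≤ jN N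
      then x N (fun i => if i ≤ jN N then C i ω₁ else 0) k
      else X k ω₂) : ℝ) : ℂ)) n


/-- The complex exponential appearing in `ofdm`. -/
noncomputable def cE (L N nn k : ℕ) : ℂ :=
  Complex.exp (2 * Real.pi * Complex.I * k * nn / ((L : ℂ) * (N : ℂ)))

lemma im_term (z : ℂ) (t : ℝ) (w : ℂ) : (z * (t : ℂ) * w).im = t * (z * w).im := by
  rw [show z * (t : ℂ) * w = (t : ℂ) * (z * w) by ring]
  simp [Complex.mul_im]

lemma cE_abs (L N nn k : ℕ) : ‖cE L N nn k‖ = 1 := by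
  rw [cE, show (2 * Real.pi * Complex.I * k * nn / ((L : ℂ) * (N : ℂ)))
      = ((2 * Real.pi * k * nn / (L * N) : ℝ) : ℂ) * Complex.I by push_cast; ring,
    Complex.norm_exp, Complex.mul_re, Complex.ofReal_re, Complex.ofReal_im]
  simp

lemma ofdm_im_repr {Ω₁ Ω₂ : Type*} (L : ℕ) (σb : ℝ) (jN : ℕ → ℕ)
    (C : ℕ → Ω₁ → ℂ) (x : (N : ℕ) → (ℕ → ℂ) → ℕ → ℝ) (X : ℕ → Ω₂ → ℝ)
    (N nn : ℕ) (ω₁ : Ω₁) (ω₂ : Ω₂) :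
    (ofdmSignedData L σb jN C x X N nn ω₁ ω₂).im
    = (∑ k ∈ (Finset.range N).filter (fun k => k ≤ jN N),
        x N (fun i => if i ≤ jN N then C i ω₁ else 0) k
          * ((C k ω₁ * cE L N nn k).im * (1 / (σb * Real.sqrt N))))
      + ∑ k ∈ (Finset.range N).filter (fun k => jN N < k),
          ((C k ω₁ * cE L N nn k).im * (1 / (σb * Real.sqrt N))) * X k ω₂ := by
  have h1 : ∀ (t : ℝ) (w : ℂ), ((t : ℂ) * w).im = t * w.im := fun t w => by
    simp [Complex.mul_im]
  simp only [ofdmSignedData, ofdm]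
  rw [h1, Complex.im_sum]
  have h2 : ∀ k : Fin N,
      (C (k : ℕ) ω₁ * (((if (k : ℕ) ≤ jN N
          then x N (fun i => if i ≤ jN N then C i ω₁ else 0) k
          else X (k : ℕ) ω₂) : ℝ) : ℂ)
        * Complex.exp (2 * Real.pi * Complex.I * ((k : ℕ) : ℂ) * (nn : ℂ)
            / ((L : ℂ) * (N : ℂ)))).im
      = (if (k : ℕ) ≤ jN N
          then x N (fun i => if i ≤ jN N then C i ω₁ else 0) k
          else X (k : ℕ) ω₂) * (C (k : ℕ) ω₁ * cE L N nn (k : ℕ)).im := by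
    intro k
    rw [im_term]
    rfl
  rw [Finset.sum_congr rfl fun k _ => h2 k]
  rw [Fin.sum_univ_eq_sum_range (fun k =>
    (if k ≤ jN N then x N (fun i => if i ≤ jN N then C i ω₁ else 0) k else X k ω₂)
      * (C k ω₁ * cE L N nn k).im) N]
  rw [Finset.mul_sum,
    ← Finset.sum_filter_add_sum_filter_not (Finset.range N) (fun k => k ≤ jN N)]
  congr 1
  · refine Finset.sum_congr rfl fun k hk => ?_
    rw [if_pos (Finset.mem_filter.mp hk).2]
    ring
  · rw [show (Finset.range N).filter (fun k => ¬ k ≤ jN N)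
        = (Finset.range N).filter (fun k => jN N < k) by
      apply Finset.filter_congr
      intro k _
      simp [not_le]]
    refine Finset.sum_congr rfl fun k hk => ?_
    rw [if_neg (not_le.mpr (Finset.mem_filter.mp hk).2)]
    ring


/-- almost surely in the data symbols,
`lim_{N→∞} E_X[ (ŝ_i(n_N, C ⊙ Y^{(N)}))² ] = (1−α)/2`, where `E_X` is the expectation
over the random signs only (here: the integral over the second probability space `ν`),
and `ŝ_i` is the imaginary part of the signal sample centered by its `E_X`-expectation. -/
theorem variance_im_tendsto
    {Ω₁ Ω₂ : Type*} [MeasurableSpace Ω₁] [MeasurableSpace Ω₂]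
    (μ : Measure Ω₁) [IsProbabilityMeasure μ] (ν : Measure Ω₂) [IsProbabilityMeasure ν]
    (L : ℕ) (hL : 2 ≤ L)
    (M' : Finset ℂ) (hM'ne : M'.Nonempty)
    (hM'sq : ∑ y ∈ M', y ^ 2 = 0)
    (σb : ℝ) (hσb : 0 < σb)
    (hσb2 : σb ^ 2 = (M'.card : ℝ)⁻¹ * ∑ y ∈ M', ‖y‖ ^ 2)
    (C : ℕ → Ω₁ → ℂ) (hCmeas : ∀ k, Measurable (C k))
    (hCindep : iIndepFun C μ)
    (hCdist : ∀ k, Measure.map (C k) μ = (M'.card : ℝ≥0∞)⁻¹ • ∑ y ∈ M', Measure.dirac y)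
    (α : ℝ) (hα0 : 0 ≤ α) (hα1 : α ≤ 1) (hαrat : ∃ q : ℚ, (q : ℝ) = α)
    (jN : ℕ → ℕ) (hjN : ∀ N, jN N = Nat.floor (α * N))
    (x : (N : ℕ) → (ℕ → ℂ) → ℕ → ℝ) (hx : ∀ N c k, x N c k = 1 ∨ x N c k = -1)
    (X : ℕ → Ω₂ → ℝ) (hXmeas : ∀ k, Measurable (X k))
    (hXindep : iIndepFun X ν)
    (hXdist : ∀ k, Measure.map (X k) ν =
      (2 : ℝ≥0∞)⁻¹ • (Measure.dirac (1 : ℝ) + Measure.dirac (-1 : ℝ)))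
    (n : ℕ → ℕ) (hn : ∀ N, n N < L * N) :
    ∀ᵐ ω₁ ∂μ,
      Tendsto (fun N : ℕ =>
          ∫ ω₂, ((ofdmSignedData L σb jN C x X N (n N) ω₁ ω₂).im -
            ∫ ω₂', (ofdmSignedData L σb jN C x X N (n N) ω₁ ω₂').im ∂ν) ^ 2 ∂ν)
        atTop (nhds ((1 - α) / 2)) := by
  classical
  set T : ℕ → Finset ℕ := fun N => (Finset.range N).filter (fun k => jN N < k) with hTdef
  set g : ℕ → ℕ → ℂ → ℝ :=
    fun N k y => ((y * cE L N (n N) k).im) ^ 2 / σb ^ 2 - 1 / 2 with hgdef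
  obtain ⟨y₀, hy₀⟩ := hM'ne
  set R : ℝ := M'.sup' ⟨y₀, hy₀⟩ (fun y => ‖y‖) with hRdef
  have hR0 : 0 ≤ R := le_trans (norm_nonneg y₀) (Finset.le_sup' _ hy₀)
  set B : ℝ := R ^ 2 / σb ^ 2 + 1 / 2 with hBdef
  have hB0 : 0 ≤ B := by positivity
  have hcard0 : (0 : ℝ) < (M'.card : ℝ) := by
    exact_mod_cast Finset.card_pos.mpr ⟨y₀, hy₀⟩
  have hgmeas : ∀ N k, Measurable (g N k) := by
    intro N k
    apply Measurable.sub_const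
    apply Measurable.div_const
    exact ((Complex.measurable_im.comp (measurable_id.mul_const _)).pow_const 2)
  have hgbd : ∀ N k, ∀ y ∈ M', |g N k y| ≤ B := by
    intro N k y hy
    have habs : |(y * cE L N (n N) k).im| ≤ R := by
      refine le_trans (Complex.abs_im_le_norm _) ?_
      rw [norm_mul, cE_abs, mul_one]
      exact Finset.le_sup' _ hy
    have h2 : ((y * cE L N (n N) k).im) ^ 2 ≤ R ^ 2 := by
      rw [← sq_abs]
      exact pow_le_pow_left₀ (abs_nonneg _) habs 2
    have hσ2 : (0 : ℝ) < σb ^ 2 := by positivity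
    have hdivle : ((y * cE L N (n N) k).im) ^ 2 / σb ^ 2 ≤ R ^ 2 / σb ^ 2 :=
      div_le_div_of_nonneg_right h2 hσ2.le
    have hdiv0 : (0 : ℝ) ≤ ((y * cE L N (n N) k).im) ^ 2 / σb ^ 2 := by positivity
    rw [hgdef, abs_le]
    constructor <;> simp only [] <;> nlinarith [hR0, sq_nonneg R]
  have hgsum : ∀ N k, ∑ y ∈ M', g N k y = 0 := by
    intro N k
    have hid : ∀ z : ℂ, (z.im) ^ 2 = (Complex.normSq z - (z * z).re) / 2 := by
      intro z
      simp only [Complex.normSq_apply, Complex.mul_re]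
      ring
    have hre0 : ∑ y ∈ M', ((y * cE L N (n N) k) * (y * cE L N (n N) k)).re = 0 := by
      rw [← Complex.re_sum]
      have : ∑ y ∈ M', (y * cE L N (n N) k) * (y * cE L N (n N) k)
          = (∑ y ∈ M', y ^ 2) * (cE L N (n N) k) ^ 2 := by
        rw [Finset.sum_congr rfl (fun y _ => (by ring :
            y * cE L N (n N) k * (y * cE L N (n N) k) = y ^ 2 * cE L N (n N) k ^ 2)),
          ← Finset.sum_mul]
      rw [this, hM'sq, zero_mul, Complex.zero_re]
    have hns : ∑ y ∈ M', Complex.normSq (y * cE L N (n N) k) = ∑ y ∈ M', ‖y‖ ^ 2 := by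
      refine Finset.sum_congr rfl fun y _ => ?_
      rw [Complex.normSq_mul, ← Complex.sq_norm, ← Complex.sq_norm, cE_abs]
      ring
    have him : ∑ y ∈ M', ((y * cE L N (n N) k).im) ^ 2 = (∑ y ∈ M', ‖y‖ ^ 2) / 2 := by
      rw [Finset.sum_congr rfl fun y _ => hid (y * cE L N (n N) k), ← Finset.sum_div,
        Finset.sum_sub_distrib, hre0, sub_zero, hns]
    have hSig : ∑ y ∈ M', ‖y‖ ^ 2 = (M'.card : ℝ) * σb ^ 2 := by
      rw [hσb2]
      field_simp
    rw [hgdef]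
    simp only []
    rw [Finset.sum_sub_distrib, ← Finset.sum_div, him, hSig, Finset.sum_const,
      nsmul_eq_mul]
    have hσ : σb ^ 2 ≠ 0 := by positivity
    field_simp
    ring
  have hTsub : ∀ N, #(T N) ≤ N := fun N =>
    le_trans (Finset.card_filter_le _ _) (by simp)
  -- the integral formula for N ≥ 1
  have hformula : ∀ (ω₁ : Ω₁) (N : ℕ), 1 ≤ N →
      (∫ ω₂, ((ofdmSignedData L σb jN C x X N (n N) ω₁ ω₂).im -
        ∫ ω₂', (ofdmSignedData L σb jN C x X N (n N) ω₁ ω₂').im ∂ν) ^ 2 ∂ν)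
      = (#(T N) : ℝ) / (2 * N) + (∑ k ∈ T N, g N k (C k ω₁)) / N := by
    intro ω₁ N hN
    set u : ℕ → ℝ := fun k => (C k ω₁ * cE L N (n N) k).im * (1 / (σb * Real.sqrt N))
      with hudef
    set c : ℝ := ∑ k ∈ (Finset.range N).filter (fun k => k ≤ jN N),
      x N (fun i => if i ≤ jN N then C i ω₁ else 0) k * u k with hcdef
    have hrepr : ∀ ω₂, (ofdmSignedData L σb jN C x X N (n N) ω₁ ω₂).im
        = c + ∑ k ∈ T N, u k * X k ω₂ := fun ω₂ =>
      ofdm_im_repr L σb jN C x X N (n N) ω₁ ω₂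
    simp only [hrepr]
    rw [variance_linear ν X hXmeas hXdist hXindep (T N) u c]
    -- now the algebraic identity
    have hNpos : (0 : ℝ) < N := by exact_mod_cast hN
    have hsqrt : Real.sqrt N ^ 2 = (N : ℝ) := Real.sq_sqrt (le_of_lt hNpos)
    have hterm : ∀ k ∈ T N, (u k) ^ 2 = (g N k (C k ω₁) + 1 / 2) / N := by
      intro k _
      rw [hudef, hgdef]
      simp only []
      rw [sub_add_cancel]
      rw [mul_pow, div_pow, one_pow, mul_pow, hsqrt]
      field_simp
    rw [Finset.sum_congr rfl hterm]
    rw [← Finset.sum_div, Finset.sum_add_distrib, Finset.sum_const, nsmul_eq_mul,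
      add_div, add_comm]
    congr 1
    field_simp
  -- deterministic limit
  have hdet : Tendsto (fun N : ℕ => (#(T N) : ℝ) / (2 * N)) atTop (𝓝 ((1 - α) / 2)) := by
    rcases eq_or_lt_of_le hα1 with hα1' | hαlt
    · have hT0 : ∀ N, #(T N) = 0 := by
        intro N
        simp only [hTdef]
        simp only [Finset.card_eq_zero]
        rw [Finset.filter_eq_empty_iff]
        intro k hk
        rw [hjN, hα1']
        simp only [one_mul, Nat.floor_natCast, not_lt]
        exact le_of_lt (Finset.mem_range.mp hk)
      simp only [hT0, Nat.cast_zero, zero_div, ← hα1', sub_self]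
      simpa using tendsto_const_nhds
    · have hfloor : ∀ N : ℕ, 1 ≤ N → jN N + 1 ≤ N := by
        intro N hN
        rw [hjN]
        have : (α * N : ℝ) < N := by
          have hNpos : (0 : ℝ) < N := by exact_mod_cast hN
          nlinarith
        have := (Nat.floor_lt (by positivity)).mpr this
        omega
      have hTcard : ∀ N : ℕ, (#(T N) : ℕ) = N - (jN N + 1) := by
        intro N
        simp only [hTdef]
        have : (Finset.range N).filter (fun k => jN N < k) = Finset.Ico (jN N + 1) N := by
          ext k
          simp only [Finset.mem_Ico, Finset.mem_filter, Finset.mem_range]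
          omega
        rw [this, Nat.card_Ico]
      have hfl : Tendsto (fun N : ℕ => (⌊α * (N : ℝ)⌋₊ : ℝ) / (N : ℝ)) atTop (𝓝 α) :=
        (tendsto_nat_floor_mul_div_atTop hα0).comp tendsto_natCast_atTop_atTop
      have h1 : Tendsto (fun N : ℕ => (1 - (⌊α * (N : ℝ)⌋₊ : ℝ) / N - 1 / N) / 2) atTop
          (𝓝 ((1 - α - 0) / 2)) :=
        (((tendsto_const_nhds).sub hfl).sub
          tendsto_one_div_atTop_nhds_zero_nat).div_const 2
      rw [sub_zero] at h1
      refine Tendsto.congr' ?_ h1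
      filter_upwards [eventually_ge_atTop 1] with N hN
      have hNpos : (0 : ℝ) < N := by exact_mod_cast hN
      rw [hTcard]
      have hle := hfloor N hN
      rw [hjN] at hle ⊢
      rw [Nat.cast_sub hle]
      push_cast
      field_simp
      ring
  -- probabilistic limit
  have hkey := key_as μ M' C hCmeas hCdist hCindep
    (fun B hB g hgm hgb hgs T => fourth_moment μ M' C hCmeas hCdist hCindep B hB g hgm hgb hgs T)
    B hB0 g hgmeas hgbd hgsum T hTsub
  filter_upwards [hkey] with ω₁ hω₁
  have hsum := hdet.add hω₁
  rw [add_zero] at hsum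
  refine Tendsto.congr' ?_ hsum
  filter_upwards [eventually_ge_atTop 1] with N hN
  exact (hformula ω₁ N hN).symm
end

section
/- Almost surely, lim_{N→∞} E_X[ ŝ_r(n_N, (C_0,…,C_{N−1}) ⊙ Y^{(N)}) · ŝ_i(n_N, (C_0,…,C_{N−1}) ⊙ Y^{(N)}) ] = 0, where E_X denotes expectation over the random signs X_{j_N+1},…,X_{N−1} only (i.e., conditional expectation given (C_k)). -/
open MeasureTheory ProbabilityTheory Filter Finset
open scoped ENNReal NNReal

private lemma integrable_dirac'' {α E : Type*} [MeasurableSpace α] [NormedAddCommGroup E]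
    {f : α → E} (hf : StronglyMeasurable f) (a : α) : Integrable f (Measure.dirac a) := by
  refine ⟨hf.aestronglyMeasurable, ?_⟩
  rw [HasFiniteIntegral, lintegral_dirac' a hf.enorm]
  exact enorm_lt_top

section X
variable {Ω₂ : Type*} [MeasurableSpace Ω₂] {ν : Measure Ω₂} [IsProbabilityMeasure ν]
  {X : Ω₂ → ℝ}

private lemma sign_ae_mem (hm : Measurable X)
    (hd : Measure.map X ν = (2 : ℝ≥0∞)⁻¹ • (Measure.dirac (1 : ℝ) + Measure.dirac (-1 : ℝ))) :
    ∀ᵐ ω ∂ν, X ω = 1 ∨ X ω = -1 := by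
  have hs : MeasurableSet ({1, -1} : Set ℝ) :=
    (measurableSet_singleton (-1)).insert 1
  have h0 : ν (X ⁻¹' ({1, -1} : Set ℝ)ᶜ) = 0 := by
    rw [← Measure.map_apply hm hs.compl, hd]
    simp [Measure.dirac_apply' _ hs.compl]
  rw [ae_iff]
  have he : {ω | ¬(X ω = 1 ∨ X ω = -1)} = X ⁻¹' ({1, -1} : Set ℝ)ᶜ := by
    ext ω; simp [not_or]
  rw [he]; exact h0

private lemma sign_integral (hm : Measurable X)
    (hd : Measure.map X ν = (2 : ℝ≥0∞)⁻¹ • (Measure.dirac (1 : ℝ) + Measure.dirac (-1 : ℝ)))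
    {f : ℝ → ℝ} (hf : StronglyMeasurable f) :
    ∫ ω, f (X ω) ∂ν = (f 1 + f (-1)) / 2 := by
  rw [← integral_map hm.aemeasurable hf.aestronglyMeasurable, hd, integral_smul_measure,
    integral_add_measure (integrable_dirac'' hf 1) (integrable_dirac'' hf (-1)),
    integral_dirac' _ _ hf, integral_dirac' _ _ hf]
  simp [ENNReal.toReal_inv]
  ring

end X
section X2
variable {Ω₂ : Type*} [MeasurableSpace Ω₂] {ν : Measure Ω₂} [IsProbabilityMeasure ν]
  {X : ℕ → Ω₂ → ℝ}

set_option linter.unusedSectionVars false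

private lemma sign_sum_product (hXmeas : ∀ k, Measurable (X k))
    (hXindep : iIndepFun X ν)
    (hXdist : ∀ k, Measure.map (X k) ν =
      (2 : ℝ≥0∞)⁻¹ • (Measure.dirac (1 : ℝ) + Measure.dirac (-1 : ℝ)))
    (T : Finset ℕ) (a b : ℕ → ℝ) :
    ∫ ω, (∑ k ∈ T, a k * X k ω) * (∑ l ∈ T, b l * X l ω) ∂ν = ∑ k ∈ T, a k * b k := by
  have hb : ∀ k, ∀ᵐ ω ∂ν, |X k ω| ≤ 1 := by
    intro k
    filter_upwards [sign_ae_mem (hXmeas k) (hXdist k)] with ω hω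
    rcases hω with h | h <;> simp [h]
  have hint : ∀ k l, Integrable (fun ω => a k * X k ω * (b l * X l ω)) ν := by
    intro k l
    refine (integrable_const (|a k| * |b l|)).mono'
      (((hXmeas k).const_mul _).mul ((hXmeas l).const_mul _)).aestronglyMeasurable ?_
    filter_upwards [hb k, hb l] with ω h1 h2
    have : |a k * X k ω * (b l * X l ω)| = |a k| * |X k ω| * (|b l| * |X l ω|) := by
      rw [abs_mul, abs_mul, abs_mul]
    rw [Real.norm_eq_abs, this]
    calc |a k| * |X k ω| * (|b l| * |X l ω|)
        ≤ |a k| * 1 * (|b l| * 1) := by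
          gcongr
      _ = |a k| * |b l| := by ring
  have hX1 : ∀ k, ∫ ω, X k ω ∂ν = 0 := by
    intro k
    have := sign_integral (ν := ν) (hXmeas k) (hXdist k) (f := fun t => t)
      stronglyMeasurable_id
    simpa using this
  have hXkl : ∀ k l, k ∈ T → l ∈ T → ∫ ω, X k ω * X l ω ∂ν = if l = k then 1 else 0 := by
    intro k l _ _
    by_cases h : l = k
    · subst h
      have := sign_integral (ν := ν) (hXmeas l) (hXdist l) (f := fun t => t * t)
        (stronglyMeasurable_id.mul stronglyMeasurable_id)
      rw [if_pos rfl]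
      rw [this]; norm_num
    · rw [if_neg h]
      have hi : IndepFun (X k) (X l) ν := hXindep.indepFun (fun hkl => h hkl.symm)
      rw [hi.integral_fun_mul_eq_mul_integral (hXmeas k).aestronglyMeasurable (hXmeas l).aestronglyMeasurable,
        hX1 k, hX1 l]
      ring
  calc ∫ ω, (∑ k ∈ T, a k * X k ω) * (∑ l ∈ T, b l * X l ω) ∂ν
      = ∫ ω, ∑ k ∈ T, ∑ l ∈ T, a k * X k ω * (b l * X l ω) ∂ν := by
        congr 1; funext ω; rw [Finset.sum_mul_sum]
    _ = ∑ k ∈ T, ∑ l ∈ T, ∫ ω, a k * X k ω * (b l * X l ω) ∂ν := by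
        rw [integral_finset_sum T fun k _ => integrable_finset_sum T fun l _ => hint k l]
        exact Finset.sum_congr rfl fun k _ => integral_finset_sum T fun l _ => hint k l
    _ = ∑ k ∈ T, ∑ l ∈ T, a k * b l * (if l = k then 1 else 0) := by
        refine Finset.sum_congr rfl fun k hk => Finset.sum_congr rfl fun l hl => ?_
        rw [← hXkl k l hk hl]
        have : ∀ ω, a k * X k ω * (b l * X l ω) = a k * b l * (X k ω * X l ω) := fun ω => by ring
        simp_rw [this]
        rw [integral_const_mul]
    _ = ∑ k ∈ T, a k * b k := by
        refine Finset.sum_congr rfl fun k hk => ?_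
        have : ∀ l ∈ T, (a k * b l * if l = k then 1 else 0)
            = if l = k then a k * b k else 0 := by
          intro l _; by_cases h : l = k <;> simp [h]
        rw [Finset.sum_congr rfl this, Finset.sum_ite_eq' T k (fun _ => a k * b k)]
        simp [hk]
  done

end X2

section Moment
variable {Ω : Type*} [MeasurableSpace Ω] {μ : Measure Ω} [IsProbabilityMeasure μ]

private lemma moment_bound (V : ℕ → Ω → ℝ) (hmeas : ∀ k, Measurable (V k))
    (hind : iIndepFun V μ)
    (R : ℝ) (hR : 0 ≤ R) (hbdd : ∀ k, ∀ᵐ ω ∂μ, |V k ω| ≤ R)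
    (hmean : ∀ k, ∫ ω, V k ω ∂μ = 0) (s : Finset ℕ) :
    (∫ ω, (∑ k ∈ s, V k ω) ^ 2 ∂μ ≤ R ^ 2 * s.card) ∧
    (∫ ω, (∑ k ∈ s, V k ω) ^ 4 ∂μ ≤ 3 * R ^ 4 * (s.card : ℝ) ^ 2) := by
  classical
  induction s using Finset.induction_on with
  | empty => simp
  | @insert a s ha IH =>
    set S : Ω → ℝ := fun ω => ∑ k ∈ s, V k ω with hS
    set u : Ω → ℝ := fun ω => V a ω with hu
    set m : ℝ := (s.card : ℝ) with hm
    have hm0 : 0 ≤ m := by positivity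
    have hSmeas : Measurable S := Finset.measurable_sum s fun k _ => hmeas k
    have hSbdd : ∀ᵐ ω ∂μ, |S ω| ≤ R * m := by
      have : ∀ᵐ ω ∂μ, ∀ k ∈ s, |V k ω| ≤ R :=
        (ae_ball_iff s.countable_toSet).2 fun k _ => hbdd k
      filter_upwards [this] with ω hω
      calc |S ω| ≤ ∑ k ∈ s, |V k ω| := Finset.abs_sum_le_sum_abs _ _
        _ ≤ ∑ _k ∈ s, R := Finset.sum_le_sum hω
        _ = R * m := by rw [Finset.sum_const]; push_cast; ring
    have hubdd : ∀ᵐ ω ∂μ, |u ω| ≤ R := hbdd a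
    have key : ∀ i j : ℕ, Integrable (fun ω => S ω ^ i * u ω ^ j) μ := by
      intro i j
      refine (integrable_const ((R * m) ^ i * R ^ j)).mono'
        ((hSmeas.pow_const i).mul ((hmeas a).pow_const j)).aestronglyMeasurable ?_
      filter_upwards [hSbdd, hubdd] with ω h1 h2
      rw [Real.norm_eq_abs, abs_mul, abs_pow, abs_pow]
      exact mul_le_mul (pow_le_pow_left₀ (abs_nonneg _) h1 i)
        (pow_le_pow_left₀ (abs_nonneg _) h2 j) (by positivity) (by positivity)
    have hSfun : (∑ j ∈ s, V j) = S := by funext ω; simp [hS]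
    have hIndep : IndepFun S u μ := by
      have := hind.indepFun_finsetSum_of_notMem hmeas ha
      rwa [hSfun] at this
    have hIpow : ∀ i : ℕ, IndepFun (fun ω => S ω ^ i) u μ := by
      intro i
      have := hIndep.comp (Measurable.pow_const measurable_id i) measurable_id
      exact this
    have hprod : ∀ i j : ℕ, ∫ ω, S ω ^ i * u ω ^ j ∂μ =
        (∫ ω, S ω ^ i ∂μ) * ∫ ω, u ω ^ j ∂μ := by
      intro i j
      have hI : IndepFun (fun ω => S ω ^ i) (fun ω => u ω ^ j) μ :=
        hIndep.comp (Measurable.pow_const measurable_id i) (Measurable.pow_const measurable_id j)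
      exact hI.integral_fun_mul_eq_mul_integral (hSmeas.pow_const i).aestronglyMeasurable
        ((hmeas a).pow_const j).aestronglyMeasurable
    have hSint : ∫ ω, S ω ∂μ = 0 := by
      rw [hS]
      rw [integral_finset_sum s fun k _ => ?_]
      · exact Finset.sum_eq_zero fun k _ => hmean k
      · refine (integrable_const R).mono' (hmeas k).aestronglyMeasurable ?_
        filter_upwards [hbdd k] with ω hω
        rwa [Real.norm_eq_abs]
    have huint : ∫ ω, u ω ∂μ = 0 := hmean a
    have hu2 : ∫ ω, u ω ^ 2 ∂μ ≤ R ^ 2 := by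
      have h1 : (fun ω => u ω ^ 2) ≤ᵐ[μ] fun _ => R ^ 2 := by
        filter_upwards [hubdd] with ω hω
        calc u ω ^ 2 = |u ω| ^ 2 := by rw [sq_abs]
          _ ≤ R ^ 2 := pow_le_pow_left₀ (abs_nonneg _) hω 2
      simpa using integral_mono_ae (by simpa using key 0 2) (integrable_const _) h1
    have hu4 : ∫ ω, u ω ^ 4 ∂μ ≤ R ^ 4 := by
      have h1 : (fun ω => u ω ^ 4) ≤ᵐ[μ] fun _ => R ^ 4 := by
        filter_upwards [hubdd] with ω hω
        calc u ω ^ 4 = |u ω| ^ 4 := by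
              rw [← abs_pow, abs_of_nonneg (by positivity)]
          _ ≤ R ^ 4 := pow_le_pow_left₀ (abs_nonneg _) hω 4
      simpa using integral_mono_ae (by simpa using key 0 4) (integrable_const _) h1
    have hS2nn : 0 ≤ ∫ ω, S ω ^ 2 ∂μ := integral_nonneg fun ω => sq_nonneg _
    have hu2nn : 0 ≤ ∫ ω, u ω ^ 2 ∂μ := integral_nonneg fun ω => sq_nonneg _
    have hS2 : ∫ ω, S ω ^ 2 ∂μ ≤ R ^ 2 * m := IH.1
    have hS4 : ∫ ω, S ω ^ 4 ∂μ ≤ 3 * R ^ 4 * m ^ 2 := IH.2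
    have hsum : ∀ ω, ∑ k ∈ insert a s, V k ω = u ω + S ω := fun ω => by
      rw [Finset.sum_insert ha]
    have hcard : ((insert a s).card : ℝ) = m + 1 := by
      rw [Finset.card_insert_of_notMem ha]; push_cast [hm]; ring
    constructor
    · have expand : ∀ ω, (u ω + S ω) ^ 2 =
          S ω ^ 2 * u ω ^ 0 + 2 * (S ω ^ 1 * u ω ^ 1) + S ω ^ 0 * u ω ^ 2 := fun ω => by ring
      simp_rw [hsum, expand]
      have i11 : Integrable (fun ω => 2 * (S ω ^ 1 * u ω ^ 1)) μ := (key 1 1).const_mul 2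
      have h1 : Integrable (fun ω => S ω ^ 2 * u ω ^ 0 + 2 * (S ω ^ 1 * u ω ^ 1)) μ :=
        (key 2 0).add i11
      rw [integral_add h1 (key 0 2), integral_add (key 2 0) i11,
        integral_const_mul, hprod 1 1]
      simp only [pow_zero, pow_one, mul_one, one_mul]
      rw [hSint]
      rw [hcard]
      nlinarith [hu2, hS2, pow_nonneg hR 2, hm0]
    · have expand : ∀ ω, (u ω + S ω) ^ 4 =
          S ω ^ 4 * u ω ^ 0 + 4 * (S ω ^ 3 * u ω ^ 1) + 6 * (S ω ^ 2 * u ω ^ 2)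
            + 4 * (S ω ^ 1 * u ω ^ 3) + S ω ^ 0 * u ω ^ 4 := fun ω => by ring
      simp_rw [hsum, expand]
      have i31 : Integrable (fun ω => 4 * (S ω ^ 3 * u ω ^ 1)) μ := (key 3 1).const_mul 4
      have i22 : Integrable (fun ω => 6 * (S ω ^ 2 * u ω ^ 2)) μ := (key 2 2).const_mul 6
      have i13 : Integrable (fun ω => 4 * (S ω ^ 1 * u ω ^ 3)) μ := (key 1 3).const_mul 4
      have h2 : Integrable (fun ω => S ω ^ 4 * u ω ^ 0 + 4 * (S ω ^ 3 * u ω ^ 1)) μ :=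
        (key 4 0).add i31
      have h3 : Integrable (fun ω => S ω ^ 4 * u ω ^ 0 + 4 * (S ω ^ 3 * u ω ^ 1)
          + 6 * (S ω ^ 2 * u ω ^ 2)) μ := h2.add i22
      have h4 : Integrable (fun ω => S ω ^ 4 * u ω ^ 0 + 4 * (S ω ^ 3 * u ω ^ 1)
          + 6 * (S ω ^ 2 * u ω ^ 2) + 4 * (S ω ^ 1 * u ω ^ 3)) μ := h3.add i13
      rw [integral_add h4 (key 0 4), integral_add h3 i13, integral_add h2 i22,
        integral_add (key 4 0) i31,
        integral_const_mul, integral_const_mul, integral_const_mul,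
        hprod 3 1, hprod 2 2, hprod 1 3]
      simp only [pow_zero, pow_one, mul_one, one_mul]
      rw [hSint, hcard, huint]
      simp only [mul_zero, zero_mul, add_zero]
      have h22 : (∫ ω, S ω ^ 2 ∂μ) * ∫ ω, u ω ^ 2 ∂μ ≤ (R ^ 2 * m) * R ^ 2 :=
        mul_le_mul hS2 hu2 hu2nn (by positivity)
      nlinarith [hS4, hu4, h22, pow_nonneg hR 4, hm0]

end Moment

section BC
variable {Ω : Type*} [MeasurableSpace Ω] {μ : Measure Ω} [IsProbabilityMeasure μ]

private lemma ae_tendsto_div (f : ℕ → Ω → ℝ) (B : ℝ)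
    (hint : ∀ N, Integrable (fun ω => (f N ω) ^ 4) μ)
    (hbound : ∀ N, ∫ ω, (f N ω) ^ 4 ∂μ ≤ B * (N : ℝ) ^ 2) :
    ∀ᵐ ω ∂μ, Tendsto (fun N => f N ω / (N : ℝ)) atTop (nhds 0) := by
  have hB : 0 ≤ B := by
    have h1 := hbound 1
    have h2 : (0 : ℝ) ≤ ∫ ω, (f 1 ω) ^ 4 ∂μ :=
      integral_nonneg fun ω => by positivity
    norm_num at h1
    linarith
  have key : ∀ m : ℕ, ∀ᵐ ω ∂μ, ∀ᶠ N in atTop, |f N ω / (N : ℝ)| < 1 / ((m : ℝ) + 1) := by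
    intro m
    set ε : ℝ := 1 / ((m : ℝ) + 1) with hε
    have hε0 : 0 < ε := by positivity
    set A : ℕ → Set Ω := fun N => {ω | (ε * ((N : ℝ) + 1)) ^ 4 ≤ (f (N + 1) ω) ^ 4} with hA
    have hAm : ∀ N : ℕ, μ (A N) ≤ ENNReal.ofReal ((B / ε ^ 4) * (1 / ((N : ℝ) + 1) ^ 2)) := by
      intro N
      have hN1 : (0 : ℝ) < (N : ℝ) + 1 := by positivity
      have hmar := mul_meas_ge_le_integral_of_nonneg
        (ae_of_all μ (fun ω => by positivity : ∀ ω, 0 ≤ (f (N + 1) ω) ^ 4))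
        (hint (N + 1)) ((ε * ((N : ℝ) + 1)) ^ 4)
      have hb := hbound (N + 1)
      have hcast : ((N + 1 : ℕ) : ℝ) = (N : ℝ) + 1 := by push_cast; ring
      rw [hcast] at hb
      have htr : (μ (A N)).toReal ≤ (B / ε ^ 4) * (1 / ((N : ℝ) + 1) ^ 2) := by
        have hpos : (0 : ℝ) < (ε * ((N : ℝ) + 1)) ^ 4 := by positivity
        have h5 : (ε * ((N : ℝ) + 1)) ^ 4 * (μ (A N)).toReal ≤ B * ((N : ℝ) + 1) ^ 2 :=
          le_trans hmar hb
        have heq : (B / ε ^ 4) * (1 / ((N : ℝ) + 1) ^ 2)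
            = (B * ((N : ℝ) + 1) ^ 2) / ((ε * ((N : ℝ) + 1)) ^ 4) := by
          field_simp
        rw [heq, le_div_iff₀ hpos]
        nlinarith [h5]
      calc μ (A N) = ENNReal.ofReal ((μ (A N)).toReal) :=
            (ENNReal.ofReal_toReal (measure_ne_top μ _)).symm
        _ ≤ ENNReal.ofReal ((B / ε ^ 4) * (1 / ((N : ℝ) + 1) ^ 2)) :=
            ENNReal.ofReal_le_ofReal htr
    have hsummable : Summable (fun N : ℕ => (B / ε ^ 4) * (1 / ((N : ℝ) + 1) ^ 2)) := by
      apply Summable.mul_left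
      have h2 : Summable (fun n : ℕ => 1 / (n : ℝ) ^ 2) :=
        Real.summable_one_div_nat_pow.2 (by norm_num)
      have := (summable_nat_add_iff 1).2 h2
      refine this.congr fun n => ?_
      push_cast; ring
    have hsum : (∑' N, μ (A N)) ≠ ∞ := by
      refine ne_top_of_le_ne_top ?_ (ENNReal.tsum_le_tsum hAm)
      rw [← ENNReal.ofReal_tsum_of_nonneg (fun N => by positivity) hsummable]
      exact ENNReal.ofReal_ne_top
    filter_upwards [ae_eventually_notMem hsum] with ω hω
    obtain ⟨a, ha⟩ := eventually_atTop.1 hω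
    refine eventually_atTop.2 ⟨a + 1, fun N hN => ?_⟩
    obtain ⟨M, rfl⟩ : ∃ M, N = M + 1 := ⟨N - 1, by omega⟩
    have hM : M ≥ a := by omega
    have h1 := ha M hM
    rw [hA] at h1
    simp only [Set.mem_setOf_eq, not_le] at h1
    have hN1 : (0 : ℝ) < ((M + 1 : ℕ) : ℝ) := by positivity
    have hcast : ((M + 1 : ℕ) : ℝ) = (M : ℝ) + 1 := by push_cast; ring
    have habs : |f (M + 1) ω| < ε * ((M : ℝ) + 1) := by
      by_contra hcon
      push_neg at hcon
      have : (ε * ((M : ℝ) + 1)) ^ 4 ≤ (f (M + 1) ω) ^ 4 := by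
        calc (ε * ((M : ℝ) + 1)) ^ 4 ≤ |f (M + 1) ω| ^ 4 :=
              pow_le_pow_left₀ (by positivity) hcon 4
          _ = (f (M + 1) ω) ^ 4 := by
              rw [← abs_pow, abs_of_nonneg (by positivity)]
      exact absurd this (not_le.2 h1)
    rw [abs_div, abs_of_nonneg (le_of_lt hN1), div_lt_iff₀ hN1, hcast]
    exact habs
  have hae : ∀ᵐ ω ∂μ, ∀ m : ℕ, ∀ᶠ N in atTop, |f N ω / (N : ℝ)| < 1 / ((m : ℝ) + 1) :=
    (ae_all_iff).2 key
  filter_upwards [hae] with ω hω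
  rw [NormedAddCommGroup.tendsto_nhds_zero]
  intro ε hε
  obtain ⟨m, hm⟩ := exists_nat_one_div_lt hε
  filter_upwards [hω m] with N hN
  rw [Real.norm_eq_abs]
  exact lt_trans hN hm

end BC

section Data
variable {Ω₁ : Type*} [MeasurableSpace Ω₁] {μ : Measure Ω₁} [IsProbabilityMeasure μ]
  {C : Ω₁ → ℂ} {M' : Finset ℂ}

set_option linter.unusedSectionVars false

private lemma data_ae_mem (hm : Measurable C) (hM'ne : M'.Nonempty)
    (hd : Measure.map C μ = (M'.card : ℝ≥0∞)⁻¹ • ∑ y ∈ M', Measure.dirac y) :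
    ∀ᵐ ω ∂μ, C ω ∈ (M' : Set ℂ) := by
  have hs : MeasurableSet (M' : Set ℂ) := M'.finite_toSet.measurableSet
  have h0 : μ (C ⁻¹' ((M' : Set ℂ))ᶜ) = 0 := by
    rw [← Measure.map_apply hm hs.compl, hd]
    simp only [Measure.smul_apply, Measure.coe_finset_sum, Finset.sum_apply, smul_eq_mul]
    have : ∀ y ∈ M', Measure.dirac y ((M' : Set ℂ))ᶜ = 0 := by
      intro y hy
      rw [Measure.dirac_apply' _ hs.compl]
      simp [hy]
    rw [Finset.sum_congr rfl this]
    simp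
  rw [ae_iff]
  have he : {ω | ¬ C ω ∈ (M' : Set ℂ)} = C ⁻¹' ((M' : Set ℂ))ᶜ := by
    ext ω; simp
  rw [he]; exact h0

private lemma data_integral (hm : Measurable C)
    (hd : Measure.map C μ = (M'.card : ℝ≥0∞)⁻¹ • ∑ y ∈ M', Measure.dirac y)
    {E : Type*} [NormedAddCommGroup E] [NormedSpace ℝ E] [CompleteSpace E] {g : ℂ → E}
    (hg : StronglyMeasurable g) :
    ∫ ω, g (C ω) ∂μ = ((M'.card : ℝ≥0∞)⁻¹).toReal • ∑ y ∈ M', g y := by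
  rw [← integral_map hm.aemeasurable hg.aestronglyMeasurable, hd, integral_smul_measure,
    integral_finset_sum_measure (fun y _ => integrable_dirac'' hg y)]
  congr 1
  exact Finset.sum_congr rfl fun y _ => integral_dirac' _ _ hg

end Data

private lemma re_mul_im (w : ℂ) : w.re * w.im = (w ^ 2).im / 2 := by
  simp [pow_two, Complex.mul_im]
  ring
/-- almost surely in the data symbols,
`lim_{N→∞} E_X[ ŝ_r(n_N, C ⊙ Y^{(N)}) · ŝ_i(n_N, C ⊙ Y^{(N)}) ] = 0`, where `E_X` is the
expectation over the random signs only (here: the integral over the second probability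
space `ν`), and `ŝ_r, ŝ_i` are the real and imaginary parts of the signal sample centered
by their `E_X`-expectations. -/
theorem covariance_re_im_tendsto
    {Ω₁ Ω₂ : Type*} [MeasurableSpace Ω₁] [MeasurableSpace Ω₂]
    (μ : Measure Ω₁) [IsProbabilityMeasure μ] (ν : Measure Ω₂) [IsProbabilityMeasure ν]
    (L : ℕ) (hL : 2 ≤ L)
    (M' : Finset ℂ) (hM'ne : M'.Nonempty)
    (hM'sq : ∑ y ∈ M', y ^ 2 = 0)
    (σb : ℝ) (hσb : 0 < σb)
    (hσb2 : σb ^ 2 = (M'.card : ℝ)⁻¹ * ∑ y ∈ M', ‖y‖ ^ 2)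
    (C : ℕ → Ω₁ → ℂ) (hCmeas : ∀ k, Measurable (C k))
    (hCindep : iIndepFun C μ)
    (hCdist : ∀ k, Measure.map (C k) μ = (M'.card : ℝ≥0∞)⁻¹ • ∑ y ∈ M', Measure.dirac y)
    (α : ℝ) (hα0 : 0 ≤ α) (hα1 : α ≤ 1) (hαrat : ∃ q : ℚ, (q : ℝ) = α)
    (jN : ℕ → ℕ) (hjN : ∀ N, jN N = Nat.floor (α * N))
    (x : (N : ℕ) → (ℕ → ℂ) → ℕ → ℝ) (hx : ∀ N c k, x N c k = 1 ∨ x N c k = -1)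
    (X : ℕ → Ω₂ → ℝ) (hXmeas : ∀ k, Measurable (X k))
    (hXindep : iIndepFun X ν)
    (hXdist : ∀ k, Measure.map (X k) ν =
      (2 : ℝ≥0∞)⁻¹ • (Measure.dirac (1 : ℝ) + Measure.dirac (-1 : ℝ)))
    (n : ℕ → ℕ) (hn : ∀ N, n N < L * N) :
    ∀ᵐ ω₁ ∂μ,
      Tendsto (fun N : ℕ =>
          ∫ ω₂, (((ofdmSignedData L σb jN C x X N (n N) ω₁ ω₂).re -
              ∫ ω₂', (ofdmSignedData L σb jN C x X N (n N) ω₁ ω₂').re ∂ν) *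
            ((ofdmSignedData L σb jN C x X N (n N) ω₁ ω₂).im -
              ∫ ω₂', (ofdmSignedData L σb jN C x X N (n N) ω₁ ω₂').im ∂ν)) ∂ν)
        atTop (nhds 0) := by
  classical
  set E : ℕ → ℕ → ℂ := fun N k =>
    Complex.exp (2 * (Real.pi : ℂ) * Complex.I * (k : ℂ) * (n N : ℂ) / ((L : ℂ) * (N : ℂ)))
    with hE
  set T : ℕ → Finset ℕ := fun N => (range N).filter (fun k => ¬ k ≤ jN N) with hT
  set V : ℕ → ℕ → Ω₁ → ℝ := fun N k ω => ((C k ω) ^ 2 * (E N k) ^ 2).im with hV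
  set f : ℕ → Ω₁ → ℝ := fun N ω => ∑ k ∈ T N, V N k ω with hf
  set R : ℝ := M'.sup' hM'ne (fun y => ‖y‖) with hR
  have hRmem : ∀ y ∈ M', ‖y‖ ≤ R := fun y hy => Finset.le_sup' _ hy
  have hR0 : 0 ≤ R := by
    obtain ⟨y0, hy0⟩ := hM'ne
    exact le_trans (norm_nonneg y0) (hRmem y0 hy0)
  have hEabs : ∀ N k, ‖E N k‖ = 1 := by
    intro N k
    have harg : 2 * (Real.pi : ℂ) * Complex.I * (k : ℂ) * (n N : ℂ) / ((L : ℂ) * (N : ℂ))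
        = ((2 * Real.pi * (k : ℝ) * (n N : ℝ) / ((L : ℝ) * (N : ℝ)) : ℝ) : ℂ) * Complex.I := by
      push_cast
      ring
    rw [hE]
    simp only
    rw [harg, Complex.norm_exp_ofReal_mul_I]
  -- measurability and independence of the V's
  have hVmeas : ∀ N k, Measurable (V N k) := fun N k =>
    Complex.measurable_im.comp (((hCmeas k).pow_const 2).mul_const _)
  have hVindep : ∀ N, iIndepFun (V N) μ := by
    intro N
    exact hCindep.comp (fun k (w : ℂ) => (w ^ 2 * (E N k) ^ 2).im)
      (fun k => Complex.measurable_im.comp ((measurable_id.pow_const 2).mul_const _))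
  have hVbdd : ∀ N k, ∀ᵐ ω ∂μ, |V N k ω| ≤ R ^ 2 := by
    intro N k
    filter_upwards [data_ae_mem (hCmeas k) hM'ne (hCdist k)] with ω hω
    calc |V N k ω| ≤ ‖(C k ω) ^ 2 * (E N k) ^ 2‖ := Complex.abs_im_le_norm _
      _ = ‖C k ω‖ ^ 2 * ‖E N k‖ ^ 2 := by rw [norm_mul, norm_pow, norm_pow]
      _ = ‖C k ω‖ ^ 2 := by rw [hEabs N k]; ring
      _ ≤ R ^ 2 := pow_le_pow_left₀ (norm_nonneg _) (hRmem _ hω) 2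
  have hVmean : ∀ N k, ∫ ω, V N k ω ∂μ = 0 := by
    intro N k
    have hg : StronglyMeasurable (fun w : ℂ => w ^ 2 * (E N k) ^ 2) :=
      ((continuous_pow 2).mul continuous_const).stronglyMeasurable
    have hgint : Integrable (fun ω => (C k ω) ^ 2 * (E N k) ^ 2) μ := by
      refine (integrable_const (R ^ 2 * ‖(E N k) ^ 2‖)).mono'
        (((hCmeas k).pow_const 2).mul_const _).aestronglyMeasurable ?_
      filter_upwards [data_ae_mem (hCmeas k) hM'ne (hCdist k)] with ω hω
      rw [norm_mul, norm_pow]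
      exact mul_le_mul_of_nonneg_right
        (pow_le_pow_left₀ (norm_nonneg _) (hRmem _ hω) 2)
        (norm_nonneg _)
    have hzero : ∫ ω, (C k ω) ^ 2 * (E N k) ^ 2 ∂μ = 0 := by
      rw [data_integral (hCmeas k) (hCdist k) hg, ← Finset.sum_mul, hM'sq, zero_mul, smul_zero]
    have him := integral_im hgint
    rw [hV]
    simp only
    simp only [RCLike.im_to_complex] at him
    rw [him, hzero]
    simp
  -- integrability and moment bound for f
  have hfbdd : ∀ N, ∀ᵐ ω ∂μ, |f N ω| ≤ R ^ 2 * (T N).card := by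
    intro N
    have : ∀ᵐ ω ∂μ, ∀ k ∈ T N, |V N k ω| ≤ R ^ 2 :=
      (ae_ball_iff (T N).countable_toSet).2 fun k _ => hVbdd N k
    filter_upwards [this] with ω hω
    calc |f N ω| ≤ ∑ k ∈ T N, |V N k ω| := Finset.abs_sum_le_sum_abs _ _
      _ ≤ ∑ _k ∈ T N, R ^ 2 := Finset.sum_le_sum hω
      _ = R ^ 2 * (T N).card := by rw [Finset.sum_const, nsmul_eq_mul]; ring
  have hfmeas : ∀ N, Measurable (f N) := fun N =>
    Finset.measurable_sum (T N) fun k _ => hVmeas N k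
  have hint4 : ∀ N, Integrable (fun ω => (f N ω) ^ 4) μ := by
    intro N
    refine (integrable_const ((R ^ 2 * (T N).card) ^ 4)).mono'
      ((hfmeas N).pow_const 4).aestronglyMeasurable ?_
    filter_upwards [hfbdd N] with ω hω
    rw [Real.norm_eq_abs, abs_pow]
    exact pow_le_pow_left₀ (abs_nonneg _) hω 4
  have hcardT : ∀ N, ((T N).card : ℝ) ≤ N := by
    intro N
    have h1 : (T N).card ≤ N := le_trans (Finset.card_filter_le _ _) (le_of_eq (card_range N))
    exact_mod_cast h1
  have hbound4 : ∀ N, ∫ ω, (f N ω) ^ 4 ∂μ ≤ (3 * (R ^ 2) ^ 4) * (N : ℝ) ^ 2 := by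
    intro N
    have h := (moment_bound (V N) (hVmeas N) (hVindep N) (R ^ 2) (by positivity)
      (hVbdd N) (hVmean N) (T N)).2
    calc ∫ ω, (f N ω) ^ 4 ∂μ ≤ 3 * (R ^ 2) ^ 4 * ((T N).card : ℝ) ^ 2 := h
      _ ≤ (3 * (R ^ 2) ^ 4) * (N : ℝ) ^ 2 := by
          have := hcardT N
          gcongr
  have hae := ae_tendsto_div f (3 * (R ^ 2) ^ 4) hint4 hbound4
  -- moments of the random signs
  have hX0 : ∀ k, ∫ ω₂, X k ω₂ ∂ν = 0 := fun k => by
    simpa using sign_integral (hXmeas k) (hXdist k) stronglyMeasurable_id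
  have hXb : ∀ k, ∀ᵐ ω₂ ∂ν, |X k ω₂| ≤ 1 := by
    intro k
    filter_upwards [sign_ae_mem (hXmeas k) (hXdist k)] with ω hω
    rcases hω with h | h <;> simp [h]
  -- the key identity for the inner integral
  have hiden : ∀ ω₁ (N : ℕ),
      (∫ ω₂, (((ofdmSignedData L σb jN C x X N (n N) ω₁ ω₂).re -
              ∫ ω₂', (ofdmSignedData L σb jN C x X N (n N) ω₁ ω₂').re ∂ν) *
            ((ofdmSignedData L σb jN C x X N (n N) ω₁ ω₂).im -
              ∫ ω₂', (ofdmSignedData L σb jN C x X N (n N) ω₁ ω₂').im ∂ν)) ∂ν)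
        = (1 / (σb * Real.sqrt N)) ^ 2 * (2⁻¹ * f N ω₁) := by
    intro ω₁ N
    set c : ℝ := 1 / (σb * Real.sqrt N) with hc
    set xv : ℕ → ℝ := fun k => x N (fun i => if i ≤ jN N then C i ω₁ else 0) k with hxv
    set z : ℕ → ℂ := fun k => (c : ℂ) * (C k ω₁ * E N k) with hz
    have hsform : ∀ ω₂, ofdmSignedData L σb jN C x X N (n N) ω₁ ω₂
        = ∑ k ∈ range N, z k * (((if k ≤ jN N then xv k else X k ω₂) : ℝ) : ℂ) := by
      intro ω₂
      simp only [ofdmSignedData, ofdm, Finset.mul_sum]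
      rw [← Fin.sum_univ_eq_sum_range
        (fun k => z k * (((if k ≤ jN N then xv k else X k ω₂) : ℝ) : ℂ)) N]
      refine Finset.sum_congr rfl fun k _ => ?_
      simp only [hz, hE, hxv, hc]
      ring
    have hsre : ∀ ω₂, (ofdmSignedData L σb jN C x X N (n N) ω₁ ω₂).re
        = ∑ k ∈ range N, (if k ≤ jN N then (z k).re * xv k else (z k).re * X k ω₂) := by
      intro ω₂
      rw [hsform ω₂, Complex.re_sum]
      refine Finset.sum_congr rfl fun k _ => ?_
      rw [mul_comm, Complex.re_ofReal_mul]
      by_cases h : k ≤ jN N <;> simp [h, mul_comm]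
    have hsim : ∀ ω₂, (ofdmSignedData L σb jN C x X N (n N) ω₁ ω₂).im
        = ∑ k ∈ range N, (if k ≤ jN N then (z k).im * xv k else (z k).im * X k ω₂) := by
      intro ω₂
      rw [hsform ω₂, Complex.im_sum]
      refine Finset.sum_congr rfl fun k _ => ?_
      rw [mul_comm, Complex.im_ofReal_mul]
      by_cases h : k ≤ jN N <;> simp [h, mul_comm]
    have hintre : ∀ (a : ℕ → ℝ) (k : ℕ),
        Integrable (fun ω₂ => if k ≤ jN N then a k * xv k else a k * X k ω₂) ν := by
      intro a k
      by_cases h : k ≤ jN N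
      · simp only [if_pos h]
        exact integrable_const _
      · simp only [if_neg h]
        refine (integrable_const |a k|).mono'
          ((hXmeas k).const_mul _).aestronglyMeasurable ?_
        filter_upwards [hXb k] with ω hω
        rw [Real.norm_eq_abs, abs_mul]
        calc |a k| * |X k ω| ≤ |a k| * 1 := by gcongr
          _ = |a k| := mul_one _
    have hintcalc : ∀ (a : ℕ → ℝ) (k : ℕ), k ∈ range N →
        ∫ ω₂, (if k ≤ jN N then a k * xv k else a k * X k ω₂) ∂ν
          = (if k ≤ jN N then a k * xv k else 0) := by
      intro a k _
      by_cases h : k ≤ jN N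
      · simp only [if_pos h, integral_const, probReal_univ, one_smul]
      · simp only [if_neg h, integral_const_mul, hX0 k, mul_zero]
    have hintegral_re : (∫ ω₂', (ofdmSignedData L σb jN C x X N (n N) ω₁ ω₂').re ∂ν)
        = ∑ k ∈ range N, (if k ≤ jN N then (z k).re * xv k else 0) := by
      simp only [hsre]
      rw [integral_finset_sum _ fun k _ => hintre (fun k => (z k).re) k]
      exact Finset.sum_congr rfl fun k hk => hintcalc (fun k => (z k).re) k hk
    have hintegral_im : (∫ ω₂', (ofdmSignedData L σb jN C x X N (n N) ω₁ ω₂').im ∂ν)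
        = ∑ k ∈ range N, (if k ≤ jN N then (z k).im * xv k else 0) := by
      simp only [hsim]
      rw [integral_finset_sum _ fun k _ => hintre (fun k => (z k).im) k]
      exact Finset.sum_congr rfl fun k hk => hintcalc (fun k => (z k).im) k hk
    have hdiff_re : ∀ ω₂, (ofdmSignedData L σb jN C x X N (n N) ω₁ ω₂).re -
        (∫ ω₂', (ofdmSignedData L σb jN C x X N (n N) ω₁ ω₂').re ∂ν)
        = ∑ k ∈ T N, (z k).re * X k ω₂ := by
      intro ω₂
      rw [hsre ω₂, hintegral_re, ← Finset.sum_sub_distrib, hT]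
      simp only
      rw [Finset.sum_filter]
      refine Finset.sum_congr rfl fun k _ => ?_
      by_cases h : k ≤ jN N <;> simp [h]
    have hdiff_im : ∀ ω₂, (ofdmSignedData L σb jN C x X N (n N) ω₁ ω₂).im -
        (∫ ω₂', (ofdmSignedData L σb jN C x X N (n N) ω₁ ω₂').im ∂ν)
        = ∑ k ∈ T N, (z k).im * X k ω₂ := by
      intro ω₂
      rw [hsim ω₂, hintegral_im, ← Finset.sum_sub_distrib, hT]
      simp only
      rw [Finset.sum_filter]
      refine Finset.sum_congr rfl fun k _ => ?_
      by_cases h : k ≤ jN N <;> simp [h]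
    calc (∫ ω₂, (((ofdmSignedData L σb jN C x X N (n N) ω₁ ω₂).re -
              ∫ ω₂', (ofdmSignedData L σb jN C x X N (n N) ω₁ ω₂').re ∂ν) *
            ((ofdmSignedData L σb jN C x X N (n N) ω₁ ω₂).im -
              ∫ ω₂', (ofdmSignedData L σb jN C x X N (n N) ω₁ ω₂').im ∂ν)) ∂ν)
        = ∫ ω₂, (∑ k ∈ T N, (z k).re * X k ω₂) * (∑ l ∈ T N, (z l).im * X l ω₂) ∂ν := by
          congr 1
          funext ω₂
          rw [hdiff_re ω₂, hdiff_im ω₂]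
      _ = ∑ k ∈ T N, (z k).re * (z k).im :=
          sign_sum_product hXmeas hXindep hXdist (T N) (fun k => (z k).re) (fun k => (z k).im)
      _ = (1 / (σb * Real.sqrt N)) ^ 2 * (2⁻¹ * f N ω₁) := by
          rw [hf]
          simp only
          rw [Finset.mul_sum, Finset.mul_sum]
          refine Finset.sum_congr rfl fun k _ => ?_
          rw [re_mul_im (z k)]
          have hz2 : (z k) ^ 2 = ((c ^ 2 : ℝ) : ℂ) * ((C k ω₁) ^ 2 * (E N k) ^ 2) := by
            rw [hz]
            simp only
            push_cast
            ring
          rw [hz2, Complex.im_ofReal_mul, hV]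
          simp only
          rw [hc]
          ring
  -- conclusion
  filter_upwards [hae] with ω₁ hω₁
  have htend : Tendsto (fun N : ℕ => (1 / (2 * σb ^ 2)) * (f N ω₁ / (N : ℝ))) atTop (nhds 0) := by
    have h := hω₁.const_mul (1 / (2 * σb ^ 2))
    rwa [mul_zero] at h
  refine Tendsto.congr' ?_ htend
  filter_upwards [eventually_ge_atTop 1] with N hN
  rw [hiden ω₁ N]
  have hN0 : (0 : ℝ) < N := by exact_mod_cast hN
  have h1 : (1 / (σb * Real.sqrt N)) ^ 2 = 1 / (σb ^ 2 * N) := by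
    rw [div_pow, one_pow, mul_pow, Real.sq_sqrt (le_of_lt (by exact_mod_cast hN0))]
  rw [h1]
  have h2 : 1 / (σb ^ 2 * (N : ℝ)) * (2⁻¹ * f N ω₁)
      = 1 / (2 * σb ^ 2) * (f N ω₁ / (N : ℝ)) := by
    field_simp
    try ring
    try tauto
  exact h2.symm
end

section
/- (1/(LN)) Σ_{n=0}^{LN−1} E[|S_n|^6] = (σ^6/(LN)) Σ_{n=0}^{LN−1} (λ_n³ + 18λ_n² + 72λ_n + 48); i.e., under the Gaussian model for the signal samples, the expected SRCM admits the closed-form expression used by the sign-decision rule. -/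
open MeasureTheory ProbabilityTheory Finset

namespace SRCM12

lemma integrable_pow_gauss (n : ℕ) :
    Integrable (fun x : ℝ => x ^ n * Real.exp (-(2⁻¹) * x ^ 2)) := by
  have h := integrable_rpow_mul_exp_neg_mul_sq (b := 2⁻¹) (by norm_num)
    (s := (n : ℝ)) (neg_one_lt_zero.trans_le (Nat.cast_nonneg n))
  simpa [Real.rpow_natCast] using h

lemma Mrec (k : ℕ) :
    ∫ x : ℝ, x ^ (k + 2) * Real.exp (-(2⁻¹) * x ^ 2) =
      (k + 1 : ℝ) * ∫ x : ℝ, x ^ k * Real.exp (-(2⁻¹) * x ^ 2) := by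
  have hu : ∀ x : ℝ, HasDerivAt (fun x : ℝ => x ^ (k + 1)) ((k + 1 : ℝ) * x ^ k) x := by
    intro x
    simpa using hasDerivAt_pow (k + 1) x
  have hv : ∀ x : ℝ, HasDerivAt (fun x : ℝ => Real.exp (-(2⁻¹) * x ^ 2))
      (-x * Real.exp (-(2⁻¹) * x ^ 2)) x := by
    intro x
    have h1 : HasDerivAt (fun x : ℝ => -(2⁻¹ : ℝ) * x ^ 2) (-x) x := by
      have := (hasDerivAt_pow 2 x).const_mul (-(2⁻¹ : ℝ))
      refine this.congr_deriv ?_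
      push_cast
      ring
    simpa [mul_comm] using h1.exp
  have hint1 : Integrable ((fun x : ℝ => x ^ (k + 1)) *
      fun x : ℝ => -x * Real.exp (-(2⁻¹) * x ^ 2)) := by
    refine ((integrable_pow_gauss (k + 2)).neg).congr ?_
    filter_upwards with x
    simp only [Pi.mul_apply, Pi.neg_apply]
    ring
  have hint2 : Integrable ((fun x : ℝ => (k + 1 : ℝ) * x ^ k) *
      fun x : ℝ => Real.exp (-(2⁻¹) * x ^ 2)) := by
    refine (((integrable_pow_gauss k).const_mul (k + 1 : ℝ))).congr ?_
    filter_upwards with x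
    simp only [Pi.mul_apply, Pi.neg_apply]
    ring
  have hint3 : Integrable ((fun x : ℝ => x ^ (k + 1)) *
      fun x : ℝ => Real.exp (-(2⁻¹) * x ^ 2)) := by
    refine (integrable_pow_gauss (k + 1)).congr ?_
    filter_upwards with x
    simp only [Pi.mul_apply]
  have key := MeasureTheory.integral_mul_deriv_eq_deriv_mul_of_integrable (fun x _ => hu x) (fun x _ => hv x) hint1 hint2 hint3
  have hL : ∫ x : ℝ, x ^ (k + 1) * (-x * Real.exp (-(2⁻¹) * x ^ 2)) =
      -∫ x : ℝ, x ^ (k + 2) * Real.exp (-(2⁻¹) * x ^ 2) := by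
    rw [← integral_neg]
    congr 1
    funext x
    ring
  have hR : ∫ x : ℝ, (k + 1 : ℝ) * x ^ k * Real.exp (-(2⁻¹) * x ^ 2) =
      (k + 1 : ℝ) * ∫ x : ℝ, x ^ k * Real.exp (-(2⁻¹) * x ^ 2) := by
    rw [← integral_const_mul]
    congr 1
    funext x
    ring
  rw [hL, hR] at key
  linarith

lemma M1 : ∫ x : ℝ, x * Real.exp (-(2⁻¹) * x ^ 2) = 0 := by
  have hu : ∀ x : ℝ, HasDerivAt (fun _ : ℝ => (1 : ℝ)) ((0 : ℝ)) x := fun x => hasDerivAt_const x 1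
  have hv : ∀ x : ℝ, HasDerivAt (fun x : ℝ => Real.exp (-(2⁻¹) * x ^ 2))
      (-x * Real.exp (-(2⁻¹) * x ^ 2)) x := by
    intro x
    have h1 : HasDerivAt (fun x : ℝ => -(2⁻¹ : ℝ) * x ^ 2) (-x) x := by
      have := (hasDerivAt_pow 2 x).const_mul (-(2⁻¹ : ℝ))
      refine this.congr_deriv ?_
      push_cast
      ring
    simpa [mul_comm] using h1.exp
  have hint1 : Integrable ((fun _ : ℝ => (1:ℝ)) * fun x : ℝ => -x * Real.exp (-(2⁻¹) * x ^ 2)) := by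
    refine ((integrable_pow_gauss 1).neg).congr ?_
    filter_upwards with x
    simp only [Pi.mul_apply, Pi.neg_apply]
    ring
  have hint2 : Integrable ((fun _ : ℝ => (0:ℝ)) * fun x : ℝ => Real.exp (-(2⁻¹) * x ^ 2)) := by
    refine (integrable_zero _ _ _).congr ?_
    filter_upwards with x
    simp
  have hint3 : Integrable ((fun _ : ℝ => (1:ℝ)) * fun x : ℝ => Real.exp (-(2⁻¹) * x ^ 2)) := by
    refine (integrable_pow_gauss 0).congr ?_
    filter_upwards with x
    simp [Pi.mul_apply]
  have key := MeasureTheory.integral_mul_deriv_eq_deriv_mul_of_integrable (fun x _ => hu x) (fun x _ => hv x) hint1 hint2 hint3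
  simp only [one_mul, zero_mul, integral_zero, neg_zero] at key
  have : ∫ x : ℝ, -x * Real.exp (-(2⁻¹) * x ^ 2) = -∫ x : ℝ, x * Real.exp (-(2⁻¹) * x ^ 2) := by
    rw [← integral_neg]; congr 1; funext x; ring
  rw [this] at key
  linarith

end SRCM12

namespace SRCM12

open scoped NNReal ENNReal

lemma pdf_eq (x : ℝ) :
    gaussianPDFReal 0 1 x = (Real.sqrt (2 * Real.pi))⁻¹ * Real.exp (-(2⁻¹) * x ^ 2) := by
  simp only [gaussianPDFReal, NNReal.coe_one, mul_one, sub_zero]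
  congr 1
  ring

lemma gauss_int_eq (g : ℝ → ℝ) :
    ∫ x, g x ∂(gaussianReal 0 1) = ∫ x, gaussianPDFReal 0 1 x * g x := by
  rw [gaussianReal_of_var_ne_zero 0 one_ne_zero]
  have hmeas : Measurable fun x => Real.toNNReal (gaussianPDFReal 0 1 x) :=
    (measurable_gaussianPDFReal 0 1).real_toNNReal
  rw [show volume.withDensity (gaussianPDF 0 1)
      = volume.withDensity fun x => ((Real.toNNReal (gaussianPDFReal 0 1 x) : ℝ≥0) : ℝ≥0∞) from rfl]
  rw [integral_withDensity_eq_integral_smul hmeas]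
  congr 1
  funext x
  rw [NNReal.smul_def, Real.coe_toNNReal _ (gaussianPDFReal_nonneg 0 1 x), smul_eq_mul]

noncomputable def GM (k : ℕ) : ℝ := ∫ x, x ^ k ∂(gaussianReal 0 1)

lemma GM_eq (k : ℕ) :
    GM k = (Real.sqrt (2 * Real.pi))⁻¹ * ∫ x, x ^ k * Real.exp (-(2⁻¹) * x ^ 2) := by
  rw [GM, gauss_int_eq, ← integral_const_mul]
  congr 1
  funext x
  rw [pdf_eq]
  ring

lemma GM0 : GM 0 = 1 := by
  rw [GM_eq]
  simp only [pow_zero, one_mul]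
  rw [integral_gaussian, show (Real.pi / 2⁻¹) = 2 * Real.pi by ring,
    inv_mul_cancel₀ (by positivity)]

lemma GM1 : GM 1 = 0 := by
  rw [GM_eq]
  simp only [pow_one]
  rw [M1, mul_zero]

lemma GMrec (k : ℕ) : GM (k + 2) = (k + 1 : ℝ) * GM k := by
  rw [GM_eq, GM_eq, Mrec]
  ring

lemma GM2 : GM 2 = 1 := by have := GMrec 0; rw [GM0] at this; norm_num at this; exact this
lemma GM3 : GM 3 = 0 := by have := GMrec 1; rw [GM1] at this; norm_num at this; exact this
lemma GM4 : GM 4 = 3 := by have := GMrec 2; rw [GM2] at this; norm_num at this; exact this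
lemma GM5 : GM 5 = 0 := by have := GMrec 3; rw [GM3] at this; norm_num at this; exact this
lemma GM6 : GM 6 = 15 := by have := GMrec 4; rw [GM4] at this; norm_num at this; exact this

lemma GM_int (k : ℕ) : Integrable (fun x : ℝ => x ^ k) (gaussianReal 0 1) := by
  rw [gaussianReal_of_var_ne_zero 0 one_ne_zero]
  have hmeas : Measurable fun x => Real.toNNReal (gaussianPDFReal 0 1 x) :=
    (measurable_gaussianPDFReal 0 1).real_toNNReal
  rw [show volume.withDensity (gaussianPDF 0 1)
      = volume.withDensity fun x => ((Real.toNNReal (gaussianPDFReal 0 1 x) : ℝ≥0) : ℝ≥0∞) from rfl]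
  rw [integrable_withDensity_iff_integrable_smul hmeas]
  refine ((integrable_pow_gauss k).const_mul ((Real.sqrt (2 * Real.pi))⁻¹)).congr ?_
  filter_upwards with x
  rw [NNReal.smul_def, Real.coe_toNNReal _ (gaussianPDFReal_nonneg 0 1 x), pdf_eq, smul_eq_mul]
  ring

end SRCM12

namespace SRCM12

variable {Ω : Type*} [MeasurableSpace Ω] {P : Measure Ω}

lemma valX {X : Ω → ℝ} (hX : Measurable X) (hdist : Measure.map X P = gaussianReal 0 1)
    (k : ℕ) : ∫ ω, X ω ^ k ∂P = GM k := by
  rw [GM, ← hdist, integral_map hX.aemeasurable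
    (((measurable_id'.pow_const k) : Measurable fun x : ℝ => x ^ k).aestronglyMeasurable)]

lemma intX {X : Ω → ℝ} (hX : Measurable X) (hdist : Measure.map X P = gaussianReal 0 1)
    (k : ℕ) : Integrable (fun ω => X ω ^ k) P := by
  have h : Integrable (fun x : ℝ => x ^ k) (Measure.map X P) := hdist ▸ GM_int k
  rwa [integrable_map_measure
    (((measurable_id'.pow_const k) : Measurable fun x : ℝ => x ^ k).aestronglyMeasurable)
    hX.aemeasurable] at h

lemma intJ {X : Ω → ℝ} (hX : Measurable X) (hdist : Measure.map X P = gaussianReal 0 1)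
    (σ c : ℝ) (m : ℕ) : Integrable (fun ω => (c + σ * X ω) ^ m) P := by
  have h : (fun ω => (c + σ * X ω) ^ m)
      = fun ω => ∑ i ∈ Finset.range (m + 1),
          (c ^ i * σ ^ (m - i) * (m.choose i)) * X ω ^ (m - i) := by
    funext ω
    rw [add_pow]
    refine Finset.sum_congr rfl fun i _ => ?_
    rw [mul_pow]
    ring
  rw [h]
  exact integrable_finset_sum _ fun i _ => (intX hX hdist (m - i)).const_mul _

lemma valJ {X : Ω → ℝ} (hX : Measurable X) (hdist : Measure.map X P = gaussianReal 0 1)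
    (σ c : ℝ) (m : ℕ) :
    ∫ ω, (c + σ * X ω) ^ m ∂P
      = ∑ i ∈ Finset.range (m + 1), c ^ i * σ ^ (m - i) * (m.choose i) * GM (m - i) := by
  have h : (fun ω => (c + σ * X ω) ^ m)
      = fun ω => ∑ i ∈ Finset.range (m + 1),
          (c ^ i * σ ^ (m - i) * (m.choose i)) * X ω ^ (m - i) := by
    funext ω
    rw [add_pow]
    refine Finset.sum_congr rfl fun i _ => ?_
    rw [mul_pow]
    ring
  rw [h, integral_finset_sum _ fun i _ => (intX hX hdist (m - i)).const_mul _]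
  refine Finset.sum_congr rfl fun i _ => ?_
  rw [integral_const_mul, valX hX hdist]

lemma valJ2 {X : Ω → ℝ} (hX : Measurable X) (hdist : Measure.map X P = gaussianReal 0 1)
    (σ c : ℝ) : ∫ ω, (c + σ * X ω) ^ 2 ∂P = c ^ 2 + σ ^ 2 := by
  rw [valJ hX hdist]
  norm_num [Finset.sum_range_succ, GM0, GM1, GM2]
  ring

lemma valJ4 {X : Ω → ℝ} (hX : Measurable X) (hdist : Measure.map X P = gaussianReal 0 1)
    (σ c : ℝ) : ∫ ω, (c + σ * X ω) ^ 4 ∂P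
      = c ^ 4 + 6 * c ^ 2 * σ ^ 2 + 3 * σ ^ 4 := by
  rw [valJ hX hdist]
  norm_num [Finset.sum_range_succ, GM0, GM1, GM2, GM3, GM4]
  rw [show Nat.choose 4 2 = 6 from by decide]
  push_cast
  ring

lemma valJ6 {X : Ω → ℝ} (hX : Measurable X) (hdist : Measure.map X P = gaussianReal 0 1)
    (σ c : ℝ) : ∫ ω, (c + σ * X ω) ^ 6 ∂P
      = c ^ 6 + 15 * c ^ 4 * σ ^ 2 + 45 * c ^ 2 * σ ^ 4 + 15 * σ ^ 6 := by
  rw [valJ hX hdist]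
  norm_num [Finset.sum_range_succ, GM0, GM1, GM2, GM3, GM4, GM5, GM6]
  rw [show Nat.choose 6 4 = 15 from by decide, show Nat.choose 6 2 = 15 from by decide]
  push_cast
  ring

end SRCM12

namespace SRCM12

variable {Ω : Type*} [MeasurableSpace Ω] {P : Measure Ω}

lemma valProd {X Y : Ω → ℝ} (hX : Measurable X) (hY : Measurable Y)
    (hdX : Measure.map X P = gaussianReal 0 1) (hdY : Measure.map Y P = gaussianReal 0 1)
    (hi : IndepFun X Y P) (σ a b : ℝ) (p q : ℕ) :
    ∫ ω, (a + σ * X ω) ^ p * (b + σ * Y ω) ^ q ∂P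
      = (∫ ω, (a + σ * X ω) ^ p ∂P) * ∫ ω, (b + σ * Y ω) ^ q ∂P := by
  have hφ : Measurable fun t : ℝ => (a + σ * t) ^ p :=
    ((measurable_id'.const_mul σ).const_add a).pow_const p
  have hψ : Measurable fun t : ℝ => (b + σ * t) ^ q :=
    ((measurable_id'.const_mul σ).const_add b).pow_const q
  have hind : IndepFun (fun ω => (a + σ * X ω) ^ p) (fun ω => (b + σ * Y ω) ^ q) P :=
    hi.comp hφ hψ
  have := hind.integral_fun_mul_eq_mul_integral (intJ hX hdX σ a p).aestronglyMeasurable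
    (intJ hY hdY σ b q).aestronglyMeasurable
  simpa [Pi.mul_apply] using this

lemma intProd {X Y : Ω → ℝ} (hX : Measurable X) (hY : Measurable Y)
    (hdX : Measure.map X P = gaussianReal 0 1) (hdY : Measure.map Y P = gaussianReal 0 1)
    (hi : IndepFun X Y P) (σ a b : ℝ) (p q : ℕ) :
    Integrable (fun ω => (a + σ * X ω) ^ p * (b + σ * Y ω) ^ q) P := by
  have hφ : Measurable fun t : ℝ => (a + σ * t) ^ p :=
    ((measurable_id'.const_mul σ).const_add a).pow_const p
  have hψ : Measurable fun t : ℝ => (b + σ * t) ^ q :=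
    ((measurable_id'.const_mul σ).const_add b).pow_const q
  have hind : IndepFun (fun ω => (a + σ * X ω) ^ p) (fun ω => (b + σ * Y ω) ^ q) P :=
    hi.comp hφ hψ
  have := hind.integrable_mul (intJ hX hdX σ a p) (intJ hY hdY σ b q)
  exact this

lemma key {X Y : Ω → ℝ} (hX : Measurable X) (hY : Measurable Y)
    (hdX : Measure.map X P = gaussianReal 0 1) (hdY : Measure.map Y P = gaussianReal 0 1)
    (hi : IndepFun X Y P) (σ a b : ℝ) (hσ : σ ≠ 0) :
    ∫ ω, ((a + σ * X ω) ^ 2 + (b + σ * Y ω) ^ 2) ^ 3 ∂P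
      = σ ^ 6 * (((a ^ 2 + b ^ 2) / σ ^ 2) ^ 3 + 18 * ((a ^ 2 + b ^ 2) / σ ^ 2) ^ 2 +
          72 * ((a ^ 2 + b ^ 2) / σ ^ 2) + 48) := by
  have h : (fun ω => ((a + σ * X ω) ^ 2 + (b + σ * Y ω) ^ 2) ^ 3)
      = fun ω => (a + σ * X ω) ^ 6 + 3 * ((a + σ * X ω) ^ 4 * (b + σ * Y ω) ^ 2)
          + 3 * ((a + σ * X ω) ^ 2 * (b + σ * Y ω) ^ 4) + (b + σ * Y ω) ^ 6 := by
    funext ω; ring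
  have i6a := intJ hX hdX σ a 6
  have i6b := intJ hY hdY σ b 6
  have i42 := intProd hX hY hdX hdY hi σ a b 4 2
  have i24 := intProd hX hY hdX hdY hi σ a b 2 4
  have iA : Integrable (fun ω => (a + σ * X ω) ^ 6
      + 3 * ((a + σ * X ω) ^ 4 * (b + σ * Y ω) ^ 2)) P := i6a.add (i42.const_mul 3)
  have iB : Integrable (fun ω => (a + σ * X ω) ^ 6
      + 3 * ((a + σ * X ω) ^ 4 * (b + σ * Y ω) ^ 2)
      + 3 * ((a + σ * X ω) ^ 2 * (b + σ * Y ω) ^ 4)) P := iA.add (i24.const_mul 3)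
  rw [h, integral_add iB i6b,
    integral_add iA (i24.const_mul 3),
    integral_add i6a (i42.const_mul 3),
    integral_const_mul, integral_const_mul,
    valProd hX hY hdX hdY hi σ a b 4 2, valProd hX hY hdX hdY hi σ a b 2 4,
    valJ6 hX hdX, valJ6 hY hdY, valJ4 hX hdX, valJ4 hY hdY, valJ2 hX hdX, valJ2 hY hdY]
  field_simp
  ring

end SRCM12

/-- under the Gaussian model `S_n = μ_n + σ·W_n`, `W_n = G_{r,n} + i·G_{i,n}`
with `G_{r,n}, G_{i,n}` independent standard real Gaussians, and `λ_n = |μ_n|²/σ²`,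
the expected SRCM admits the closed form
`(1/(LN)) Σ_n E[|S_n|^6] = (σ^6/(LN)) Σ_n (λ_n³ + 18λ_n² + 72λ_n + 48)`. -/
theorem expected_srcm_gaussian_closed_form
    {Ω : Type*} [MeasurableSpace Ω] (P : Measure Ω) [IsProbabilityMeasure P]
    (L N : ℕ) (hLN : 1 ≤ L * N) (σ : ℝ) (hσ : 0 < σ)
    (μv : ℕ → ℂ) (Gr Gi : ℕ → Ω → ℝ)
    (hGr : ∀ n, Measurable (Gr n)) (hGi : ∀ n, Measurable (Gi n))
    (hGrdist : ∀ n, Measure.map (Gr n) P = gaussianReal 0 1)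
    (hGidist : ∀ n, Measure.map (Gi n) P = gaussianReal 0 1)
    (hindep : ∀ n, IndepFun (Gr n) (Gi n) P) :
    (1 / (L * N) : ℝ) *
        ∑ n ∈ Finset.range (L * N),
          ∫ ω, ‖μv n + (σ : ℂ) * ((Gr n ω : ℂ) + Complex.I * (Gi n ω : ℂ))‖ ^ 6 ∂P =
      (σ ^ 6 / (L * N)) *
        ∑ n ∈ Finset.range (L * N),
          ((‖μv n‖ ^ 2 / σ ^ 2) ^ 3 + 18 * (‖μv n‖ ^ 2 / σ ^ 2) ^ 2 +
            72 * (‖μv n‖ ^ 2 / σ ^ 2) + 48) := by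
  have hσ' : σ ≠ 0 := ne_of_gt hσ
  have hsum : ∀ n ∈ Finset.range (L * N),
      (∫ ω, ‖μv n + (σ : ℂ) * ((Gr n ω : ℂ) + Complex.I * (Gi n ω : ℂ))‖ ^ 6 ∂P)
        = σ ^ 6 * ((‖μv n‖ ^ 2 / σ ^ 2) ^ 3 + 18 * (‖μv n‖ ^ 2 / σ ^ 2) ^ 2 +
            72 * (‖μv n‖ ^ 2 / σ ^ 2) + 48) := by
    intro n _
    have hpt : ∀ ω, ‖μv n + (σ : ℂ) * ((Gr n ω : ℂ) + Complex.I * (Gi n ω : ℂ))‖ ^ 6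
        = (((μv n).re + σ * Gr n ω) ^ 2 + ((μv n).im + σ * Gi n ω) ^ 2) ^ 3 := by
      intro ω
      set z := μv n + (σ : ℂ) * ((Gr n ω : ℂ) + Complex.I * (Gi n ω : ℂ)) with hz
      have hre : z.re = (μv n).re + σ * Gr n ω := by simp [hz]
      have him : z.im = (μv n).im + σ * Gi n ω := by simp [hz]
      have h2 : ‖z‖ ^ 2 = z.re ^ 2 + z.im ^ 2 := by
        rw [Complex.sq_norm, Complex.normSq_apply]; ring
      calc ‖z‖ ^ 6 = (‖z‖ ^ 2) ^ 3 := by ring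
        _ = (((μv n).re + σ * Gr n ω) ^ 2 + ((μv n).im + σ * Gi n ω) ^ 2) ^ 3 := by
            rw [h2, hre, him]
    have hnorm : ‖μv n‖ ^ 2 = (μv n).re ^ 2 + (μv n).im ^ 2 := by
      rw [Complex.sq_norm, Complex.normSq_apply]; ring
    simp_rw [hpt]
    rw [SRCM12.key (hGr n) (hGi n) (hGrdist n) (hGidist n) (hindep n) σ
      (μv n).re (μv n).im hσ', hnorm]
  rw [Finset.sum_congr rfl hsum, ← Finset.mul_sum]
  ring
end
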